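/- arXiv:1309.2982 — 6 statements merged into one kernel-verified Lean document; each statement's English description precedes it below -/
import Mathlib

section
/- Let $0 \le a_T < \cdots < a_1 < 1 < b_1 < \cdots < b_T$ and let $\alpha = \min_{1\le i\le T}\{a_{i-1}-a_i, b_i - b_{i-1}\} > 0$ (with $a_0=b_0=1$). Suppose $H = (H_0, H_1(s_1), \ldots, H_{T-1}(s_1,\ldots,s_{T-1}))$ is a family of real-valued functions ($H_i$ defined on $\prod_{j=1}^i [a_j,b_j]$) and $C > 0$ is such that $\sum_{i=0}^{T-1} H_i(s_1,\ldots,s_i)(s_{i+1}-s_i) > -C$ for all paths $(s_0=1, s_1, \ldots, s_T)$ with $s_i \in [a_i, b_i]$. Then there exists $M = M(C, \alpha, (a_i), (b_i)) > 0$, independent of $H$, such that $|H_i(s_1,\ldots,s_i)| \le M$ for all $i$ and all admissible $(s_1,\ldots,s_i)$. -/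
/-- Lemma 4.1: a uniform lower bound on the terminal gains over the compact
path space `Ω = {1} × [a 1, b 1] × ⋯ × [a T, b T]` forces a uniform bound,
independent of the strategy, on the (adapted) trading strategy `H`. -/
theorem stmt0 (T : ℕ) (hT : 0 < T) (a b : ℕ → ℝ)
    (ha0 : a 0 = 1) (hb0 : b 0 = 1) (haT : 0 ≤ a T)
    (hadec : ∀ i, 1 ≤ i → i ≤ T → a i < a (i - 1))
    (hbinc : ∀ i, 1 ≤ i → i ≤ T → b (i - 1) < b i)
    (C : ℝ) (hC : 0 < C) :
    ∃ M > (0 : ℝ), ∀ H : ℕ → (ℕ → ℝ) → ℝ,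
      (∀ i, i < T → ∀ s s' : ℕ → ℝ, (∀ j, j ≤ i → s j = s' j) → H i s = H i s') →
      (∀ s : ℕ → ℝ, s 0 = 1 → (∀ i, 1 ≤ i → i ≤ T → a i ≤ s i ∧ s i ≤ b i) →
        -C < ∑ i ∈ Finset.range T, H i s * (s (i + 1) - s i)) →
      ∀ i, i < T → ∀ s : ℕ → ℝ, s 0 = 1 →
        (∀ j, 1 ≤ j → j ≤ T → a j ≤ s j ∧ s j ≤ b j) →
        |H i s| ≤ M := by
  -- monotonicity of a and b
  have haTT : ∀ i j : ℕ, i ≤ j → j ≤ T → a j ≤ a i := by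
    intro i j hij hjT
    obtain ⟨k, rfl⟩ := Nat.exists_eq_add_of_le hij
    clear hij
    induction k with
    | zero => simp
    | succ n ih =>
      have h1 : a (i + n + 1) < a (i + n) := by
        have := hadec (i + n + 1) (by omega) (by omega)
        simpa using this
      have h2 := ih (by omega)
      have e : i + (n + 1) = i + n + 1 := by omega
      rw [e]
      linarith
  have hbTT : ∀ i j : ℕ, i ≤ j → j ≤ T → b i ≤ b j := by
    intro i j hij hjT
    obtain ⟨k, rfl⟩ := Nat.exists_eq_add_of_le hij
    clear hij
    induction k with
    | zero => simp
    | succ n ih =>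
      have h1 : b (i + n) < b (i + n + 1) := by
        have := hbinc (i + n + 1) (by omega) (by omega)
        simpa using this
      have h2 := ih (by omega)
      have e : i + (n + 1) = i + n + 1 := by omega
      rw [e]
      linarith
  -- the minimal gap α
  have hne : (Finset.Icc 1 T).Nonempty := Finset.nonempty_Icc.mpr hT
  set A : ℕ → ℝ := fun i => min (a (i - 1) - a i) (b i - b (i - 1)) with hAdef
  set α := (Finset.Icc 1 T).inf' hne A with hαdef
  have hαpos : 0 < α := by
    rw [hαdef, Finset.lt_inf'_iff]
    intro i hi
    simp only [Finset.mem_Icc] at hi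
    exact lt_min (by linarith [hadec i hi.1 hi.2]) (by linarith [hbinc i hi.1 hi.2])
  have hαa : ∀ i, 1 ≤ i → i ≤ T → α ≤ a (i - 1) - a i := fun i h1 h2 =>
    le_trans (Finset.inf'_le A (Finset.mem_Icc.mpr ⟨h1, h2⟩)) (min_le_left _ _)
  have hαb : ∀ i, 1 ≤ i → i ≤ T → α ≤ b i - b (i - 1) := fun i h1 h2 =>
    le_trans (Finset.inf'_le A (Finset.mem_Icc.mpr ⟨h1, h2⟩)) (min_le_right _ _)
  set D := b T - a T with hDdef
  have hD0 : 0 ≤ D := by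
    have h1 : a T ≤ a 0 := haTT 0 T (by omega) le_rfl
    have h2 : b 0 ≤ b T := hbTT 0 T (by omega) le_rfl
    rw [hDdef]; rw [ha0] at h1; rw [hb0] at h2; linarith
  set K : ℝ := 1 + D / α with hKdef
  have hK1 : 1 ≤ K := by
    have : 0 ≤ D / α := div_nonneg hD0 hαpos.le
    rw [hKdef]; linarith
  refine ⟨C * K ^ T / α, by positivity, ?_⟩
  intro H hadapt hgain i hiT s hs0 hs
  -- bounds on s for all indices ≤ T
  have hsab : ∀ j, j ≤ T → a j ≤ s j ∧ s j ≤ b j := by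
    intro j hj
    rcases Nat.eq_zero_or_pos j with rfl | hj1
    · rw [hs0, ha0, hb0]; exact ⟨le_rfl, le_rfl⟩
    · exact hs j hj1 hj
  set G : ℕ → ℝ := fun n => ∑ k ∈ Finset.range n, H k s * (s (k + 1) - s k) with hGdef
  -- key perturbation inequality
  have keyA : ∀ m, m < T → ∀ x, a (m + 1) ≤ x → x ≤ b (m + 1) →
      -C < G m + H m s * (x - s m) := by
    intro m hm x hx1 hx2
    set s' : ℕ → ℝ := fun j => if j ≤ m then s j else x with hs'def
    have hs'0 : s' 0 = 1 := by simp [hs'def, hs0]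
    have hadm : ∀ j, 1 ≤ j → j ≤ T → a j ≤ s' j ∧ s' j ≤ b j := by
      intro j h1 h2
      by_cases h : j ≤ m
      · simpa [hs'def, h] using hs j h1 h2
      · have hj : m + 1 ≤ j := by omega
        have hs'j : s' j = x := by simp [hs'def, h]
        rw [hs'j]
        exact ⟨le_trans (haTT _ _ hj h2) hx1, le_trans hx2 (hbTT _ _ hj h2)⟩
    have hsum := hgain s' hs'0 hadm
    have hsub : Finset.range (m + 1) ⊆ Finset.range T := Finset.range_subset_range.mpr (by omega)
    have hsplit : ∑ k ∈ Finset.range T, H k s' * (s' (k + 1) - s' k)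
        = ∑ k ∈ Finset.range (m + 1), H k s' * (s' (k + 1) - s' k) := by
      refine (Finset.sum_subset hsub ?_).symm
      intro k _ hk2
      simp only [Finset.mem_range] at hk2
      have h1 : s' (k + 1) = x := by simp [hs'def]; omega
      have h2 : s' k = x := by simp [hs'def]; omega
      rw [h1, h2]; ring
    have heqG : ∀ k, k ≤ m → H k s' * (s' (k + 1) - s' k) = H k s * (s' (k + 1) - s k) := by
      intro k hk
      have hHk : H k s = H k s' := hadapt k (by omega) s s' (by
        intro j hj
        simp [hs'def, show j ≤ m by omega])
      have hsk : s' k = s k := by simp [hs'def, hk]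
      rw [← hHk, hsk]
    have hfin : ∑ k ∈ Finset.range T, H k s' * (s' (k + 1) - s' k)
        = G m + H m s * (x - s m) := by
      rw [hsplit, Finset.sum_range_succ]
      have h1 : H m s' * (s' (m + 1) - s' m) = H m s * (x - s m) := by
        rw [heqG m le_rfl]
        have : s' (m + 1) = x := by simp [hs'def]
        rw [this]
      rw [h1]
      congr 1
      apply Finset.sum_congr rfl
      intro k hk
      simp only [Finset.mem_range] at hk
      rw [heqG k (by omega)]
      have : s' (k + 1) = s (k + 1) := by simp [hs'def, show k + 1 ≤ m by omega]
      rw [this]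
    rw [hfin] at hsum
    exact hsum
  -- bound on |H m s| in terms of G m
  have keyB : ∀ m, m < T → |H m s| * α ≤ C + G m := by
    intro m hm
    have hsm := hsab m (by omega)
    have hga := hαa (m + 1) (by omega) (by omega)
    have hgb := hαb (m + 1) (by omega) (by omega)
    simp only [Nat.add_sub_cancel] at hga hgb
    rcases le_or_gt 0 (H m s) with h | h
    · have hx1 : a (m + 1) ≤ s m - α := by linarith [hsm.1]
      have hx2 : s m - α ≤ b (m + 1) := by
        have := hbTT m (m + 1) (by omega) (by omega)
        linarith [hsm.2, hαpos]
      have := keyA m hm (s m - α) hx1 hx2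
      rw [abs_of_nonneg h]
      nlinarith
    · have hx1 : a (m + 1) ≤ s m + α := by
        have := haTT m (m + 1) (by omega) (by omega)
        linarith [hsm.1, hαpos]
      have hx2 : s m + α ≤ b (m + 1) := by linarith [hsm.2]
      have := keyA m hm (s m + α) hx1 hx2
      rw [abs_of_neg h]
      nlinarith
  -- inductive bound on G
  have keyC : ∀ m, m ≤ T → C + G m ≤ C * K ^ m := by
    intro m
    induction m with
    | zero => intro _; simp [hGdef]
    | succ n ih =>
      intro hn1
      have hn : n < T := by omega
      have IH := ih (by omega)
      have hB := keyB n hn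
      have hCG : 0 ≤ C + G n := le_trans (by positivity) hB
      have hH : |H n s| ≤ (C + G n) / α := (le_div_iff₀ hαpos).mpr hB
      have hinc : |s (n + 1) - s n| ≤ D := by
        have h1 := hsab n (by omega)
        have h2 := hsab (n + 1) (by omega)
        have h3 := haTT n T (by omega) le_rfl
        have h4 := haTT (n + 1) T (by omega) le_rfl
        have h5 := hbTT n T (by omega) le_rfl
        have h6 := hbTT (n + 1) T (by omega) le_rfl
        rw [abs_le, hDdef]
        constructor <;> [skip; skip] <;> nlinarith [h1.1, h1.2, h2.1, h2.2]
      have hGsucc : G (n + 1) = G n + H n s * (s (n + 1) - s n) := by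
        simp [hGdef, Finset.sum_range_succ]
      have hstep : H n s * (s (n + 1) - s n) ≤ |H n s| * D := by
        calc H n s * (s (n + 1) - s n) ≤ |H n s * (s (n + 1) - s n)| := le_abs_self _
          _ = |H n s| * |s (n + 1) - s n| := abs_mul _ _
          _ ≤ |H n s| * D := mul_le_mul_of_nonneg_left hinc (abs_nonneg _)
      have hK0 : (0:ℝ) < K := lt_of_lt_of_le one_pos hK1
      calc C + G (n + 1) = (C + G n) + H n s * (s (n + 1) - s n) := by rw [hGsucc]; ring
        _ ≤ (C + G n) + |H n s| * D := by linarith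
        _ ≤ (C + G n) + (C + G n) / α * D := by
            have := mul_le_mul_of_nonneg_right hH hD0
            linarith
        _ = (C + G n) * K := by rw [hKdef]; field_simp
        _ ≤ C * K ^ n * K := mul_le_mul_of_nonneg_right IH hK0.le
        _ = C * K ^ (n + 1) := by ring
  -- conclude
  have hB := keyB i hiT
  have hCG := keyC i (by omega)
  have hKi : K ^ i ≤ K ^ T := pow_le_pow_right₀ hK1 (by omega)
  have h1 : |H i s| ≤ (C + G i) / α := (le_div_iff₀ hαpos).mpr hB
  have h2 : (C + G i) / α ≤ C * K ^ T / α := by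
    gcongr
    have : C * K ^ i ≤ C * K ^ T := mul_le_mul_of_nonneg_left hKi hC.le
    linarith
  exact h1.trans h2
end

section
/- Let $\mathcal{K} \subset \{1\} \times \mathbb{R}_{\ge 0}^T$ be a reasonable path space, i.e., for every path $(s_0=1,\ldots,s_T) \in \mathcal{K}$ and every $t$: (i) if $s_t > 0$ then there exist two paths in $\mathcal{K}$ agreeing with $s$ up to time $t$, one with $(t+1)$-th coordinate strictly less than $s_t$ and one strictly greater; (ii) if $s_t = 0$ then $s_k = 0$ for all $k \ge t+1$. Then for any predictable trading strategy $H$ (a family $H_t(s_1,\ldots,s_t)$ of real-valued functions), if $(H\cdot S)_T(s) = \sum_{t=0}^{T-1} H_t(s_1,\ldots,s_t)(s_{t+1}-s_t) \ge 0$ for all $s \in \mathcal{K}$, then $(H\cdot S)_T(s) = 0$ for all $s \in \mathcal{K}$; in fact $H_t(s_1,\ldots,s_t) = 0$ whenever $s_t > 0$. -/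
/-- On a reasonable path space `K`, pathwise nonnegativity of the terminal
gains of an adapted strategy `H` implies the gains vanish identically;
in fact `H t s = 0` whenever `s t > 0`. -/
theorem stmt2 (T : ℕ) (K : Set (ℕ → ℝ))
    (hK1 : ∀ s ∈ K, s 0 = 1)
    (hKpos : ∀ s ∈ K, ∀ t, 0 ≤ s t)
    (hbranch : ∀ s ∈ K, ∀ t, t < T → 0 < s t →
      (∃ s' ∈ K, (∀ j, j ≤ t → s' j = s j) ∧ s' (t + 1) < s t) ∧
      (∃ s' ∈ K, (∀ j, j ≤ t → s' j = s j) ∧ s t < s' (t + 1)))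
    (habsorb : ∀ s ∈ K, ∀ t, t ≤ T → s t = 0 → ∀ k, t + 1 ≤ k → k ≤ T → s k = 0)
    (H : ℕ → (ℕ → ℝ) → ℝ)
    (hH : ∀ t, t < T → ∀ s s' : ℕ → ℝ, (∀ j, j ≤ t → s j = s' j) → H t s = H t s')
    (hnn : ∀ s ∈ K, 0 ≤ ∑ t ∈ Finset.range T, H t s * (s (t + 1) - s t)) :
    (∀ s ∈ K, ∑ t ∈ Finset.range T, H t s * (s (t + 1) - s t) = 0) ∧
    (∀ s ∈ K, ∀ t, t < T → 0 < s t → H t s = 0) := by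
  -- Key lemma: no path can have a strictly negative partial gain at any time.
  have key : ∀ n t, t + n = T → ∀ s ∈ K,
      (∑ k ∈ Finset.range t, H k s * (s (k + 1) - s k)) < 0 → False := by
    intro n
    induction n with
    | zero =>
      intro t ht s hs hlt
      have hT : t = T := by omega
      subst hT
      linarith [hnn s hs]
    | succ n ih =>
      intro t ht s hs hlt
      have htT : t < T := by omega
      rcases eq_or_lt_of_le (hKpos s hs t) with h0 | hpos
      · -- s t = 0 : all later increments vanish
        have hzero : ∀ k, t ≤ k → k ≤ T → s k = 0 := by
          intro k hk1 hk2
          rcases eq_or_lt_of_le hk1 with rfl | h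
          · exact h0.symm
          · exact habsorb s hs t htT.le h0.symm k h hk2
        have hsum : (∑ k ∈ Finset.range t, H k s * (s (k + 1) - s k))
            = ∑ k ∈ Finset.range T, H k s * (s (k + 1) - s k) := by
          apply Finset.sum_subset
          · exact Finset.range_subset_range.2 htT.le
          · intro k hk hnk
            simp only [Finset.mem_range, not_lt] at hk hnk
            rw [hzero (k + 1) (by omega) (by omega), hzero k hnk (by omega)]
            ring
        have := hnn s hs
        rw [← hsum] at this
        linarith
      · rcases hbranch s hs t htT hpos with ⟨⟨sd, hsd, hagd, hltd⟩, ⟨su, hsu, hagu, hltu⟩⟩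
        rcases le_or_gt 0 (H t s) with hH0 | hH0
        · -- nonnegative position: move down
          apply ih (t + 1) (by omega) sd hsd
          rw [Finset.sum_range_succ]
          have e1 : ∀ k ∈ Finset.range t,
              H k sd * (sd (k + 1) - sd k) = H k s * (s (k + 1) - s k) := by
            intro k hk
            simp only [Finset.mem_range] at hk
            rw [hH k (by omega) sd s (fun j hj => hagd j (by omega)),
              hagd (k + 1) (by omega), hagd k (by omega)]
          rw [Finset.sum_congr rfl e1,
            hH t htT sd s (fun j hj => hagd j hj), hagd t le_rfl]
          have hmul : H t s * (sd (t + 1) - s t) ≤ 0 :=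
            mul_nonpos_iff.2 (Or.inl ⟨hH0, by linarith⟩)
          linarith
        · -- negative position: move up
          apply ih (t + 1) (by omega) su hsu
          rw [Finset.sum_range_succ]
          have e1 : ∀ k ∈ Finset.range t,
              H k su * (su (k + 1) - su k) = H k s * (s (k + 1) - s k) := by
            intro k hk
            simp only [Finset.mem_range] at hk
            rw [hH k (by omega) su s (fun j hj => hagu j (by omega)),
              hagu (k + 1) (by omega), hagu k (by omega)]
          rw [Finset.sum_congr rfl e1,
            hH t htT su s (fun j hj => hagu j hj), hagu t le_rfl]
          have hmul : H t s * (su (t + 1) - s t) ≤ 0 :=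
            mul_nonpos_iff.2 (Or.inr ⟨hH0.le, by linarith⟩)
          linarith
  -- Part 2 first, by strong induction on t.
  have key2 : ∀ t, ∀ s ∈ K, t < T → 0 < s t → H t s = 0 := by
    intro t
    induction t using Nat.strong_induction_on with
    | _ t ih =>
      intro s hs htT hpos
      have headzero : ∀ s' ∈ K,
          (∑ k ∈ Finset.range t, H k s' * (s' (k + 1) - s' k)) = 0 := by
        intro s' hs'
        apply Finset.sum_eq_zero
        intro k hk
        simp only [Finset.mem_range] at hk
        rcases eq_or_lt_of_le (hKpos s' hs' k) with h0 | hposk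
        · have h1 : s' (k + 1) = 0 :=
            habsorb s' hs' k (by omega) h0.symm (k + 1) le_rfl (by omega)
          rw [h1, ← h0]; ring
        · rw [ih k hk s' hs' (by omega) hposk]; ring
      by_contra hne
      rcases hbranch s hs t htT hpos with ⟨⟨sd, hsd, hagd, hltd⟩, ⟨su, hsu, hagu, hltu⟩⟩
      rcases lt_or_gt_of_ne hne with hneg | hposH
      · -- H t s < 0 : use the up branch
        apply key (T - (t + 1)) (t + 1) (by omega) su hsu
        rw [Finset.sum_range_succ, headzero su hsu,
          hH t htT su s (fun j hj => hagu j hj), hagu t le_rfl]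
        have hmul : H t s * (su (t + 1) - s t) < 0 :=
          mul_neg_of_neg_of_pos hneg (by linarith)
        linarith
      · -- H t s > 0 : use the down branch
        apply key (T - (t + 1)) (t + 1) (by omega) sd hsd
        rw [Finset.sum_range_succ, headzero sd hsd,
          hH t htT sd s (fun j hj => hagd j hj), hagd t le_rfl]
        have hmul : H t s * (sd (t + 1) - s t) < 0 :=
          mul_neg_of_pos_of_neg hposH (by linarith)
        linarith
  constructor
  · intro s hs
    apply Finset.sum_eq_zero
    intro k hk
    simp only [Finset.mem_range] at hk
    rcases eq_or_lt_of_le (hKpos s hs k) with h0 | hposk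
    · rw [habsorb s hs k (by omega) h0.symm (k + 1) le_rfl (by omega), ← h0]; ring
    · rw [key2 k s hs hk hposk]; ring
  · exact fun s hs t ht hp => key2 t s hs ht hp
end

section
/- Let $\mu_0, \ldots, \mu_T$ be probability measures on $\mathbb{R}_+$ that are the marginals of a (discrete-time) martingale, i.e., $\int h\, d\mu_i$ is nondecreasing in $i$ for every convex function $h: \mathbb{R}_+ \to \mathbb{R}$ (such that the integrals exist). For each $n$, define probability measures $\mu_i^n$ on the grid $K^n = \{0, 1/2^n, 2/2^n, \ldots\}$ by $\mu_i^n(\{0\}) = \int_0^{1/2^n}(1 - 2^n x)\, d\mu_i(x)$ and $\mu_i^n(\{k/2^n\}) = \int_{(k-1)/2^n}^{k/2^n}(2^n x + 1 - k)\, d\mu_i(x) + \int_{k/2^n}^{(k+1)/2^n}(1 + k - 2^n x)\, d\mu_i(x)$ for $k \ge 1$. Then: (1) each $\mu_i^n$ is a probability measure supported on $K^n$; (2) $\mu_i^n \to \mu_i$ weakly as $n \to \infty$; (3) for every convex $h$, $\int h\, d\mu_i^n$ is nondecreasing in $i$, so $\mu_0^n, \ldots, \mu_T^n$ are again in convex increasing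 order and hence are the marginals of a martingale on $(K^n)^{T+1}$. -/
open MeasureTheory

/-- The discretization of a measure `μ` on `ℝ₊` onto the dyadic grid
`{0, 1/2ⁿ, 2/2ⁿ, …}`: the point `k/2ⁿ` receives the mass
`∫_{[(k-1)/2ⁿ, k/2ⁿ)} (2ⁿx + 1 - k) dμ + ∫_{[k/2ⁿ, (k+1)/2ⁿ)} (1 + k - 2ⁿx) dμ`. -/
noncomputable def gridMeasure (n : ℕ) (μ : Measure ℝ) : Measure ℝ :=
  Measure.sum fun k : ℕ =>
    (ENNReal.ofReal
      ((∫ x in Set.Ico (((k : ℝ) - 1) / 2 ^ n) ((k : ℝ) / 2 ^ n), (2 ^ n * x + 1 - (k : ℝ)) ∂μ) +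
       (∫ x in Set.Ico ((k : ℝ) / 2 ^ n) (((k : ℝ) + 1) / 2 ^ n), (1 + (k : ℝ) - 2 ^ n * x) ∂μ))) •
      Measure.dirac ((k : ℝ) / 2 ^ n)

namespace GridAux

noncomputable def tent (n k : ℕ) (x : ℝ) : ℝ := max 0 (1 - |2 ^ n * x - k|)

lemma tent_nonneg (n k : ℕ) (x : ℝ) : 0 ≤ tent n k x := le_max_left _ _

lemma tent_le_one (n k : ℕ) (x : ℝ) : tent n k x ≤ 1 := by
  unfold tent
  have := abs_nonneg (2 ^ n * x - (k : ℝ))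
  apply max_le <;> linarith

lemma tent_continuous (n k : ℕ) : Continuous (tent n k) := by
  unfold tent; fun_prop

lemma tent_integrable (n k : ℕ) (μ : Measure ℝ) [IsFiniteMeasure μ] :
    Integrable (tent n k) μ := by
  refine (integrable_const (1 : ℝ)).mono' ((tent_continuous n k).aestronglyMeasurable) ?_
  refine Filter.Eventually.of_forall fun x => ?_
  rw [Real.norm_eq_abs, abs_of_nonneg (tent_nonneg n k x)]
  exact tent_le_one n k x

noncomputable def rk (n k : ℕ) (μ : Measure ℝ) : ℝ := ∫ x, tent n k x ∂μ

lemma rk_def (n k : ℕ) (μ : Measure ℝ) : rk n k μ = ∫ x, tent n k x ∂μ := rfl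

lemma rk_nonneg (n k : ℕ) (μ : Measure ℝ) : 0 ≤ rk n k μ :=
  integral_nonneg (tent_nonneg n k)

lemma tpos (n : ℕ) : (0:ℝ) < 2 ^ n := by positivity

/-- the weight in `gridMeasure` equals `∫ tent`. -/
lemma weight_eq (n k : ℕ) (μ : Measure ℝ) [IsFiniteMeasure μ] :
    (∫ x in Set.Ico (((k : ℝ) - 1) / 2 ^ n) ((k : ℝ) / 2 ^ n), (2 ^ n * x + 1 - (k : ℝ)) ∂μ) +
       (∫ x in Set.Ico ((k : ℝ) / 2 ^ n) (((k : ℝ) + 1) / 2 ^ n), (1 + (k : ℝ) - 2 ^ n * x) ∂μ)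
      = rk n k μ := by
  have h2 : (0:ℝ) < 2 ^ n := tpos n
  have e1 : ∫ x in Set.Ico (((k : ℝ) - 1) / 2 ^ n) ((k : ℝ) / 2 ^ n),
      (2 ^ n * x + 1 - (k : ℝ)) ∂μ
      = ∫ x in Set.Ico (((k : ℝ) - 1) / 2 ^ n) ((k : ℝ) / 2 ^ n), tent n k x ∂μ := by
    refine setIntegral_congr_fun measurableSet_Ico fun x hx => ?_
    obtain ⟨hx1, hx2⟩ := hx
    rw [div_le_iff₀ h2] at hx1
    rw [lt_div_iff₀ h2] at hx2
    unfold tent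
    rw [abs_of_nonpos (by nlinarith), max_eq_right (by nlinarith)]
    ring
  have e2 : ∫ x in Set.Ico ((k : ℝ) / 2 ^ n) (((k : ℝ) + 1) / 2 ^ n),
      (1 + (k : ℝ) - 2 ^ n * x) ∂μ
      = ∫ x in Set.Ico ((k : ℝ) / 2 ^ n) (((k : ℝ) + 1) / 2 ^ n), tent n k x ∂μ := by
    refine setIntegral_congr_fun measurableSet_Ico fun x hx => ?_
    obtain ⟨hx1, hx2⟩ := hx
    rw [div_le_iff₀ h2] at hx1
    rw [lt_div_iff₀ h2] at hx2
    unfold tent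
    rw [abs_of_nonneg (by nlinarith), max_eq_right (by nlinarith)]
    ring
  rw [e1, e2, ← setIntegral_union (Set.Ico_disjoint_Ico_same) measurableSet_Ico
    ((tent_integrable n k μ).integrableOn) ((tent_integrable n k μ).integrableOn)]
  rw [Set.Ico_union_Ico_eq_Ico (by gcongr <;> norm_num) (by gcongr <;> norm_num)]
  refine setIntegral_eq_integral_of_forall_compl_eq_zero fun x hx => ?_
  simp only [Set.mem_Ico, not_and_or, not_le, not_lt] at hx
  unfold tent
  rcases hx with hx | hx
  · rw [lt_div_iff₀ h2] at hx
    rw [max_eq_left (by rw [sub_nonpos, abs_of_nonpos (by nlinarith)]; nlinarith)]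
  · rw [div_le_iff₀ h2] at hx
    rw [max_eq_left (by rw [sub_nonpos, abs_of_nonneg (by nlinarith)]; nlinarith)]

lemma gridMeasure_eq (n : ℕ) (μ : Measure ℝ) [IsFiniteMeasure μ] :
    _root_.gridMeasure n μ =
      Measure.sum fun k : ℕ => ENNReal.ofReal (rk n k μ) • Measure.dirac ((k : ℝ) / 2 ^ n) := by
  unfold _root_.gridMeasure
  congr 1
  funext k
  rw [weight_eq]

section TwoTerm

variable {n : ℕ} {x : ℝ}

lemma floor_le' (n : ℕ) (x : ℝ) (hx : 0 ≤ x) : (⌊2 ^ n * x⌋₊ : ℝ) ≤ 2 ^ n * x :=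
  Nat.floor_le (by positivity)

lemma lt_floor_add_one' (n : ℕ) (x : ℝ) : 2 ^ n * x < ⌊2 ^ n * x⌋₊ + 1 :=
  Nat.lt_floor_add_one _

lemma tent_eq_zero (hx : 0 ≤ x) {k : ℕ} (hk1 : k ≠ ⌊2 ^ n * x⌋₊) (hk2 : k ≠ ⌊2 ^ n * x⌋₊ + 1) :
    tent n k x = 0 := by
  have h1 := floor_le' n x hx
  have h2 := lt_floor_add_one' n x
  have hk : k < ⌊2 ^ n * x⌋₊ ∨ ⌊2 ^ n * x⌋₊ + 1 < k := by omega
  unfold tent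
  rcases hk with hk | hk
  · have : (k : ℝ) + 1 ≤ ⌊2 ^ n * x⌋₊ := by exact_mod_cast hk
    rw [max_eq_left (by rw [sub_nonpos, abs_of_nonneg (by linarith)]; linarith)]
  · have : (⌊2 ^ n * x⌋₊ : ℝ) + 2 ≤ k := by exact_mod_cast hk
    rw [max_eq_left (by rw [sub_nonpos, abs_of_nonpos (by linarith)]; linarith)]

lemma tent_floor (hx : 0 ≤ x) :
    tent n (⌊2 ^ n * x⌋₊) x = 1 - (2 ^ n * x - ⌊2 ^ n * x⌋₊) := by
  have h1 := floor_le' n x hx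
  have h2 := lt_floor_add_one' n x
  unfold tent
  rw [abs_of_nonneg (by linarith), max_eq_right (by linarith)]

lemma tent_floor_succ (hx : 0 ≤ x) :
    tent n (⌊2 ^ n * x⌋₊ + 1) x = 2 ^ n * x - ⌊2 ^ n * x⌋₊ := by
  have h1 := floor_le' n x hx
  have h2 := lt_floor_add_one' n x
  unfold tent
  push_cast
  rw [abs_of_nonpos (by linarith), max_eq_right (by linarith)]
  ring

lemma tsum_mul_tent (hx : 0 ≤ x) (g : ℕ → ℝ) :
    ∑' k : ℕ, g k * tent n k x
      = g ⌊2 ^ n * x⌋₊ * (1 - (2 ^ n * x - ⌊2 ^ n * x⌋₊))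
        + g (⌊2 ^ n * x⌋₊ + 1) * (2 ^ n * x - ⌊2 ^ n * x⌋₊) := by
  rw [tsum_eq_sum (s := {⌊2 ^ n * x⌋₊, ⌊2 ^ n * x⌋₊ + 1})
    (fun k hk => by
      simp only [Finset.mem_insert, Finset.mem_singleton, not_or] at hk
      rw [tent_eq_zero hx hk.1 hk.2, mul_zero])]
  rw [Finset.sum_insert (by simp), Finset.sum_singleton, tent_floor hx, tent_floor_succ hx]

lemma tsum_enn_tent (hx : 0 ≤ x) (c : ℕ → ENNReal) :
    ∑' k : ℕ, c k * ENNReal.ofReal (tent n k x)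
      = c ⌊2 ^ n * x⌋₊ * ENNReal.ofReal (1 - (2 ^ n * x - ⌊2 ^ n * x⌋₊))
        + c (⌊2 ^ n * x⌋₊ + 1) * ENNReal.ofReal (2 ^ n * x - ⌊2 ^ n * x⌋₊) := by
  rw [tsum_eq_sum (s := {⌊2 ^ n * x⌋₊, ⌊2 ^ n * x⌋₊ + 1})
    (fun k hk => by
      simp only [Finset.mem_insert, Finset.mem_singleton, not_or] at hk
      rw [tent_eq_zero hx hk.1 hk.2, ENNReal.ofReal_zero, mul_zero])]
  rw [Finset.sum_insert (by simp), Finset.sum_singleton, tent_floor hx, tent_floor_succ hx]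

lemma tsum_enn_tent_one (hx : 0 ≤ x) :
    ∑' k : ℕ, ENNReal.ofReal (tent n k x) = 1 := by
  have h1 := floor_le' n x hx
  have h2 := lt_floor_add_one' n x
  have := tsum_enn_tent (n := n) hx (fun _ => 1)
  simp only [one_mul] at this
  rw [this, ← ENNReal.ofReal_add (by linarith) (by linarith)]
  norm_num

end TwoTerm

/-- piecewise linear interpolation of `g` along the grid `{k/2^n}`. -/
noncomputable def interp (g : ℝ → ℝ) (n : ℕ) (x : ℝ) : ℝ :=
  g ((⌊2 ^ n * x⌋₊ : ℝ) / 2 ^ n)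
    + (2 ^ n * x - ⌊2 ^ n * x⌋₊) *
      (g (((⌊2 ^ n * x⌋₊ : ℝ) + 1) / 2 ^ n) - g ((⌊2 ^ n * x⌋₊ : ℝ) / 2 ^ n))

lemma interp_eq_tsum {g : ℝ → ℝ} {n : ℕ} {x : ℝ} (hx : 0 ≤ x) :
    interp g n x = ∑' k : ℕ, g ((k : ℝ) / 2 ^ n) * tent n k x := by
  rw [tsum_mul_tent hx]
  unfold interp
  push_cast
  ring

lemma measurable_interp (g : ℝ → ℝ) (n : ℕ) : Measurable (interp g n) := by
  have hm : Measurable fun x : ℝ => ⌊2 ^ n * x⌋₊ :=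
    Nat.measurable_floor.comp (measurable_const.mul measurable_id)
  have h1 : Measurable fun x : ℝ => g ((⌊2 ^ n * x⌋₊ : ℝ) / 2 ^ n) :=
    (measurable_from_nat (f := fun k : ℕ => g ((k : ℝ) / 2 ^ n))).comp hm
  have h2 : Measurable fun x : ℝ => g (((⌊2 ^ n * x⌋₊ : ℝ) + 1) / 2 ^ n) :=
    (measurable_from_nat (f := fun k : ℕ => g (((k : ℝ) + 1) / 2 ^ n))).comp hm
  have h3 : Measurable fun x : ℝ => (⌊2 ^ n * x⌋₊ : ℝ) :=
    measurable_from_nat.comp hm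
  exact h1.add (((measurable_const.mul measurable_id).sub h3).mul (h2.sub h1))

section Key

variable {n : ℕ} {μ : Measure ℝ} [IsFiniteMeasure μ]

lemma ae_nonneg (hμ : μ (Set.Iio 0) = 0) : ∀ᵐ x ∂μ, 0 ≤ x := by
  rw [ae_iff]
  convert hμ using 2
  ext x
  simp [not_le]

lemma ofReal_rk (n k : ℕ) (μ : Measure ℝ) [IsFiniteMeasure μ] :
    ENNReal.ofReal (rk n k μ) = ∫⁻ x, ENNReal.ofReal (tent n k x) ∂μ :=
  ofReal_integral_eq_lintegral_ofReal (tent_integrable n k μ)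
    (Filter.Eventually.of_forall (tent_nonneg n k))

lemma lintegral_norm_grid (g : ℝ → ℝ) :
    ∫⁻ x, (‖g x‖₊ : ENNReal) ∂(gridMeasure n μ)
      = ∑' k : ℕ, ENNReal.ofReal (rk n k μ) * (‖g ((k : ℝ) / 2 ^ n)‖₊ : ENNReal) := by
  rw [GridAux.gridMeasure_eq, lintegral_sum_measure]
  congr 1
  funext k
  rw [lintegral_smul_measure, lintegral_dirac, smul_eq_mul]

lemma sum_fin (g : ℝ → ℝ) (hg : Integrable g (gridMeasure n μ)) :
    ∑' k : ℕ, ENNReal.ofReal (rk n k μ) * (‖g ((k : ℝ) / 2 ^ n)‖₊ : ENNReal) ≠ ⊤ := by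
  rw [← lintegral_norm_grid]
  exact hg.2.ne

lemma lintegral_term (k : ℕ) (c : ℝ) :
    ∫⁻ x, (‖c * tent n k x‖₊ : ENNReal) ∂μ
      = ENNReal.ofReal (rk n k μ) * (‖c‖₊ : ENNReal) := by
  rw [ofReal_rk]
  rw [← lintegral_mul_const' _ _ (by simp)]
  congr 1
  funext x
  rw [nnnorm_mul, ENNReal.coe_mul, (show (‖tent n k x‖₊ : ENNReal) = ENNReal.ofReal (tent n k x) from Real.enorm_eq_ofReal (tent_nonneg n k x)), mul_comm]

lemma integrable_interp (hμ : μ (Set.Iio 0) = 0) (g : ℝ → ℝ)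
    (hg : Integrable g (gridMeasure n μ)) : Integrable (interp g n) μ := by
  refine ⟨(measurable_interp g n).aestronglyMeasurable, ?_⟩
  unfold HasFiniteIntegral
  have hb : ∀ᵐ x ∂μ, (‖interp g n x‖₊ : ENNReal)
      ≤ ∑' k : ℕ, (‖g ((k : ℝ) / 2 ^ n)‖₊ : ENNReal) * ENNReal.ofReal (tent n k x) := by
    filter_upwards [ae_nonneg hμ] with x hx
    rw [tsum_enn_tent hx]
    set m := ⌊2 ^ n * x⌋₊
    set t := 2 ^ n * x - (m : ℝ) with ht
    have h1 : (0:ℝ) ≤ t := by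
      have := floor_le' n x hx; linarith
    have h2 : t ≤ 1 := by
      have := lt_floor_add_one' n x; rw [ht]; push_cast; linarith
    have he : interp g n x = g ((m : ℝ) / 2 ^ n) * (1 - t) + g (((m : ℝ) + 1) / 2 ^ n) * t := by
      unfold interp; ring
    rw [← enorm_eq_nnnorm, Real.enorm_eq_ofReal_abs, he]
    calc ENNReal.ofReal |g ((m : ℝ) / 2 ^ n) * (1 - t) + g (((m : ℝ) + 1) / 2 ^ n) * t|
        ≤ ENNReal.ofReal (|g ((m : ℝ) / 2 ^ n)| * (1 - t) + |g (((m : ℝ) + 1) / 2 ^ n)| * t) := by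
          apply ENNReal.ofReal_le_ofReal
          calc |g ((m : ℝ) / 2 ^ n) * (1 - t) + g (((m : ℝ) + 1) / 2 ^ n) * t|
              ≤ |g ((m : ℝ) / 2 ^ n) * (1 - t)| + |g (((m : ℝ) + 1) / 2 ^ n) * t| := abs_add_le _ _
            _ = |g ((m : ℝ) / 2 ^ n)| * (1 - t) + |g (((m : ℝ) + 1) / 2 ^ n)| * t := by
                rw [abs_mul, abs_mul, abs_of_nonneg (by linarith : (0:ℝ) ≤ 1 - t),
                  abs_of_nonneg h1]
      _ = (‖g ((m : ℝ) / 2 ^ n)‖₊ : ENNReal) * ENNReal.ofReal (1 - t)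
            + (‖g (((m : ℝ) + 1) / 2 ^ n)‖₊ : ENNReal) * ENNReal.ofReal t := by
          rw [ENNReal.ofReal_add (mul_nonneg (abs_nonneg _) (by linarith)) (mul_nonneg (abs_nonneg _) h1),
            ENNReal.ofReal_mul (abs_nonneg _), ENNReal.ofReal_mul (abs_nonneg _),
            ← enorm_eq_nnnorm, Real.enorm_eq_ofReal_abs, ← enorm_eq_nnnorm, Real.enorm_eq_ofReal_abs]
    · push_cast; rfl
  calc ∫⁻ x, (‖interp g n x‖₊ : ENNReal) ∂μ
      ≤ ∫⁻ x, ∑' k : ℕ, (‖g ((k : ℝ) / 2 ^ n)‖₊ : ENNReal) * ENNReal.ofReal (tent n k x) ∂μ :=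
        lintegral_mono_ae hb
    _ = ∑' k : ℕ, ∫⁻ x, (‖g ((k : ℝ) / 2 ^ n)‖₊ : ENNReal) * ENNReal.ofReal (tent n k x) ∂μ :=
        lintegral_tsum fun k => (ENNReal.measurable_ofReal.comp
          (tent_continuous n k).measurable).const_mul _ |>.aemeasurable
    _ = ∑' k : ℕ, ENNReal.ofReal (rk n k μ) * (‖g ((k : ℝ) / 2 ^ n)‖₊ : ENNReal) := by
        congr 1; funext k
        rw [lintegral_const_mul' _ _ (by simp), ofReal_rk, mul_comm]
    _ < ⊤ := (sum_fin g hg).lt_top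

lemma integral_grid_eq (hμ : μ (Set.Iio 0) = 0) (g : ℝ → ℝ)
    (hg : Integrable g (gridMeasure n μ)) :
    ∫ x, g x ∂(gridMeasure n μ) = ∫ x, interp g n x ∂μ := by
  have hrw := GridAux.gridMeasure_eq n μ
  have hsum : ∑' k : ℕ, ∫⁻ x, (‖g ((k : ℝ) / 2 ^ n) * tent n k x‖₊ : ENNReal) ∂μ ≠ ⊤ := by
    have h := sum_fin g hg
    simp_rw [lintegral_term]
    exact h
  calc ∫ x, g x ∂(gridMeasure n μ)
      = ∑' k : ℕ, ∫ x, g x ∂(ENNReal.ofReal (rk n k μ) • Measure.dirac ((k : ℝ) / 2 ^ n)) := by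
        rw [hrw] at hg ⊢
        exact integral_sum_measure hg
    _ = ∑' k : ℕ, ∫ x, g ((k : ℝ) / 2 ^ n) * tent n k x ∂μ := by
        congr 1; funext k
        rw [integral_smul_measure, integral_dirac, ENNReal.toReal_ofReal (rk_nonneg n k μ),
          integral_const_mul, smul_eq_mul, mul_comm, rk_def]
    _ = ∫ x, ∑' k : ℕ, g ((k : ℝ) / 2 ^ n) * tent n k x ∂μ :=
        (integral_tsum
          (fun k => (continuous_const.mul (tent_continuous n k)).aestronglyMeasurable)
          hsum).symm
    _ = ∫ x, interp g n x ∂μ := integral_congr_ae (by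
        filter_upwards [ae_nonneg hμ] with x hx
        exact (interp_eq_tsum hx).symm)

lemma gridMeasure_univ (hμ : μ (Set.Iio 0) = 0) :
    gridMeasure n μ Set.univ = μ Set.univ := by
  rw [GridAux.gridMeasure_eq, Measure.sum_apply _ MeasurableSet.univ]
  simp only [Measure.smul_apply, measure_univ, smul_eq_mul, mul_one, Measure.dirac_apply' _ MeasurableSet.univ]
  simp only [Set.indicator_univ, Pi.one_apply, mul_one]
  calc ∑' k : ℕ, ENNReal.ofReal (rk n k μ)
      = ∑' k : ℕ, ∫⁻ x, ENNReal.ofReal (tent n k x) ∂μ := by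
        congr 1; funext k; exact ofReal_rk n k μ
    _ = ∫⁻ x, ∑' k : ℕ, ENNReal.ofReal (tent n k x) ∂μ :=
        (lintegral_tsum fun k => (ENNReal.measurable_ofReal.comp
          (tent_continuous n k).measurable).aemeasurable).symm
    _ = ∫⁻ _, 1 ∂μ := by
        refine lintegral_congr_ae ?_
        filter_upwards [ae_nonneg hμ] with x hx
        exact tsum_enn_tent_one hx
    _ = μ Set.univ := by rw [lintegral_one]

end Key

section Convex

/-- the line through `(k/2ⁿ, h(k/2ⁿ))` and `((k+1)/2ⁿ, h((k+1)/2ⁿ))`. -/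
noncomputable def lin (h : ℝ → ℝ) (n k : ℕ) (x : ℝ) : ℝ :=
  h ((k : ℝ) / 2 ^ n)
    + ((h (((k : ℝ) + 1) / 2 ^ n) - h ((k : ℝ) / 2 ^ n)) * 2 ^ n) * (x - (k : ℝ) / 2 ^ n)

variable {h : ℝ → ℝ} {n : ℕ}

lemma slope_mono (hconv : ConvexOn ℝ (Set.Ici 0) h) (k : ℕ) :
    (h (((k : ℝ) + 1) / 2 ^ n) - h ((k : ℝ) / 2 ^ n)) * 2 ^ n
      ≤ (h (((k : ℝ) + 2) / 2 ^ n) - h (((k : ℝ) + 1) / 2 ^ n)) * 2 ^ n := by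
  have h2 : (0:ℝ) < 2 ^ n := tpos n
  have key := hconv.slope_mono_adjacent (x := (k : ℝ) / 2 ^ n) (y := ((k : ℝ) + 1) / 2 ^ n)
    (z := ((k : ℝ) + 2) / 2 ^ n) (Set.mem_Ici.mpr (by positivity)) (Set.mem_Ici.mpr (by positivity))
    (by rw [div_lt_div_iff_of_pos_right h2]; linarith)
    (by rw [div_lt_div_iff_of_pos_right h2]; linarith)
  have e1 : ((k : ℝ) + 1) / 2 ^ n - (k : ℝ) / 2 ^ n = ((2:ℝ) ^ n)⁻¹ := by ring
  have e2 : ((k : ℝ) + 2) / 2 ^ n - ((k : ℝ) + 1) / 2 ^ n = ((2:ℝ) ^ n)⁻¹ := by ring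
  rw [e1, e2, div_inv_eq_mul, div_inv_eq_mul] at key
  exact key

lemma interp_eq_lin (x : ℝ) : interp h n x = lin h n ⌊2 ^ n * x⌋₊ x := by
  have h2 : (2:ℝ) ^ n ≠ 0 := ne_of_gt (tpos n)
  unfold interp lin
  field_simp

lemma lin_succ_sub (k : ℕ) (x : ℝ) :
    lin h n (k + 1) x - lin h n k x
      = ((h (((k : ℝ) + 2) / 2 ^ n) - h (((k : ℝ) + 1) / 2 ^ n)) * 2 ^ n
          - (h (((k : ℝ) + 1) / 2 ^ n) - h ((k : ℝ) / 2 ^ n)) * 2 ^ n)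
        * (x - ((k : ℝ) + 1) / 2 ^ n) := by
  have h2 : (2:ℝ) ^ n ≠ 0 := ne_of_gt (tpos n)
  unfold lin
  push_cast
  field_simp
  ring

lemma chain_le (f : ℕ → ℝ) :
    ∀ m : ℕ, (∀ k, k < m → f k ≤ f (k + 1)) → ∀ k, k ≤ m → f k ≤ f m := by
  intro m
  induction m with
  | zero => intro _ k hk; rw [Nat.le_zero.mp hk]
  | succ m ih =>
    intro hst k hk
    rcases Nat.eq_or_lt_of_le hk with rfl | hlt
    · rfl
    · exact (ih (fun j hj => hst j (hj.trans (Nat.lt_succ_self m))) k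
        (Nat.lt_succ_iff.mp hlt)).trans (hst m (Nat.lt_succ_self m))

lemma chain_ge (f : ℕ → ℝ) (m : ℕ) (hst : ∀ k, m ≤ k → f (k + 1) ≤ f k) :
    ∀ k, m ≤ k → f k ≤ f m := by
  intro k hk
  induction k, hk using Nat.le_induction with
  | base => rfl
  | succ k hk ih => exact (hst k hk).trans ih

lemma lin_le_interp (hconv : ConvexOn ℝ (Set.Ici 0) h) {x : ℝ} (hx : 0 ≤ x) (k : ℕ) :
    lin h n k x ≤ interp h n x := by
  have h2 : (0:ℝ) < 2 ^ n := tpos n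
  set m := ⌊2 ^ n * x⌋₊ with hm
  have hf1 : (m : ℝ) ≤ 2 ^ n * x := floor_le' n x hx
  have hf2 : 2 ^ n * x < (m : ℝ) + 1 := by
    have := lt_floor_add_one' n x; push_cast at this ⊢; linarith
  rw [interp_eq_lin, ← hm]
  rcases le_or_gt k m with hk | hk
  · refine chain_le (fun j => lin h n j x) m (fun j hj => ?_) k hk
    have hx' : ((j : ℝ) + 1) / 2 ^ n ≤ x := by
      rw [div_le_iff₀ h2]
      have : (j : ℝ) + 1 ≤ m := by exact_mod_cast hj
      nlinarith
    have := slope_mono (n := n) hconv j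
    nlinarith [lin_succ_sub (h := h) (n := n) j x]
  · refine chain_ge (fun j => lin h n j x) m (fun j hj => ?_) k hk.le
    have hx' : x ≤ ((j : ℝ) + 1) / 2 ^ n := by
      rw [le_div_iff₀ h2]
      have : (m : ℝ) ≤ j := by exact_mod_cast hj
      nlinarith
    have := slope_mono (n := n) hconv j
    nlinarith [lin_succ_sub (h := h) (n := n) j x]

lemma convexOn_interp (hconv : ConvexOn ℝ (Set.Ici 0) h) (n : ℕ) :
    ConvexOn ℝ (Set.Ici 0) (interp h n) := by
  refine ⟨convex_Ici 0, fun x hx y hy a b ha hb hab => ?_⟩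
  simp only [smul_eq_mul]
  have hz : (0:ℝ) ≤ a * x + b * y :=
    add_nonneg (mul_nonneg ha hx) (mul_nonneg hb hy)
  rw [interp_eq_lin (a * x + b * y)]
  set m := ⌊2 ^ n * (a * x + b * y)⌋₊
  have haff : lin h n m (a * x + b * y) = a * lin h n m x + b * lin h n m y := by
    unfold lin
    linear_combination
      ((h (((m : ℝ) + 1) / 2 ^ n) - h ((m : ℝ) / 2 ^ n)) * 2 ^ n * ((m : ℝ) / 2 ^ n)
        - h ((m : ℝ) / 2 ^ n)) * hab
  rw [haff]
  have l1 : lin h n m x ≤ interp h n x := lin_le_interp hconv hx m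
  have l2 : lin h n m y ≤ interp h n y := lin_le_interp hconv hy m
  have := mul_le_mul_of_nonneg_left l1 ha
  have := mul_le_mul_of_nonneg_left l2 hb
  linarith

end Convex

section Tendsto

open Filter

lemma interp_tendsto (f : ℝ → ℝ) (hf : Continuous f) {x : ℝ} (hx : 0 ≤ x) :
    Tendsto (fun n => interp f n x) atTop (nhds (f x)) := by
  set a : ℕ → ℝ := fun n => (⌊2 ^ n * x⌋₊ : ℝ) / 2 ^ n with ha
  set b : ℕ → ℝ := fun n => ((⌊2 ^ n * x⌋₊ : ℝ) + 1) / 2 ^ n with hb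
  have hpow : Tendsto (fun n : ℕ => (1:ℝ) / 2 ^ n) atTop (nhds 0) := by
    have := tendsto_pow_atTop_nhds_zero_of_lt_one (by norm_num : (0:ℝ) ≤ 1/2)
      (by norm_num : (1:ℝ)/2 < 1)
    simpa [div_pow] using this
  have hax : ∀ n, a n ≤ x := fun n => by
    show (⌊2 ^ n * x⌋₊ : ℝ) / 2 ^ n ≤ x
    rw [div_le_iff₀ (tpos n)]
    nlinarith [floor_le' n x hx]
  have hax2 : ∀ n, x - 1 / 2 ^ n ≤ a n := fun n => by
    have h1 := lt_floor_add_one' n x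
    have h2 := tpos n
    have hc : (1:ℝ) / 2 ^ n * 2 ^ n = 1 := by field_simp
    show x - 1 / 2 ^ n ≤ (⌊2 ^ n * x⌋₊ : ℝ) / 2 ^ n
    rw [le_div_iff₀ h2]
    nlinarith [hc]
  have haT : Tendsto a atTop (nhds x) := by
    refine tendsto_of_tendsto_of_tendsto_of_le_of_le
      (g := fun n => x - 1 / 2 ^ n) (h := fun _ => x) ?_ tendsto_const_nhds hax2 hax
    simpa using tendsto_const_nhds.sub hpow
  have hbT : Tendsto b atTop (nhds x) := by
    have : b = fun n => a n + 1 / 2 ^ n := by funext n; rw [ha, hb]; ring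
    rw [this]
    simpa using haT.add hpow
  have hfa : Tendsto (fun n => f (a n)) atTop (nhds (f x)) := (hf.tendsto x).comp haT
  have hfb : Tendsto (fun n => f (b n)) atTop (nhds (f x)) := (hf.tendsto x).comp hbT
  have h0 : Tendsto (fun n => interp f n x - f (a n)) atTop (nhds 0) := by
    have hbnd : ∀ n, ‖interp f n x - f (a n)‖ ≤ ‖f (b n) - f (a n)‖ := by
      intro n
      have he : interp f n x - f (a n) = (2 ^ n * x - ⌊2 ^ n * x⌋₊) * (f (b n) - f (a n)) := by
        unfold interp; rw [ha, hb]; ring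
      rw [he, norm_mul]
      have h1 : (0:ℝ) ≤ 2 ^ n * x - ⌊2 ^ n * x⌋₊ := by
        have := floor_le' n x hx; linarith
      have h2 : 2 ^ n * x - (⌊2 ^ n * x⌋₊ : ℝ) ≤ 1 := by
        have := lt_floor_add_one' n x; linarith
      calc ‖2 ^ n * x - (⌊2 ^ n * x⌋₊ : ℝ)‖ * ‖f (b n) - f (a n)‖
          ≤ 1 * ‖f (b n) - f (a n)‖ := by
            apply mul_le_mul_of_nonneg_right _ (norm_nonneg _)
            rw [Real.norm_eq_abs, abs_of_nonneg h1]; exact h2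
        _ = ‖f (b n) - f (a n)‖ := one_mul _
    have htend : Tendsto (fun n => ‖f (b n) - f (a n)‖) atTop (nhds 0) := by
      simpa using (hfb.sub hfa).norm
    exact squeeze_zero_norm hbnd htend
  have : (fun n => interp f n x) = fun n => (interp f n x - f (a n)) + f (a n) := by
    funext n; ring
  rw [this]
  simpa using h0.add hfa

end Tendsto

end GridAux

open GridAux in
/-- If `μ 0, …, μ T` are probability measures on `ℝ₊` in convex (increasing) order
(i.e. marginals of a martingale), then the grid discretizations `gridMeasure n (μ i)`:
(1) are probability measures; (2) are supported on the grid `Kⁿ`;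
(3) converge weakly to `μ i` as `n → ∞`; and
(4) are again in convex order, hence are the marginals of a martingale on `(Kⁿ)^{T+1}`. -/
theorem stmt3 (T : ℕ) (μ : ℕ → Measure ℝ)
    (hprob : ∀ i ≤ T, IsProbabilityMeasure (μ i))
    (hsupp : ∀ i ≤ T, μ i (Set.Iio 0) = 0)
    (hconvord : ∀ h : ℝ → ℝ, ConvexOn ℝ (Set.Ici 0) h →
      (∀ i ≤ T, Integrable h (μ i)) →
      ∀ i j, i ≤ j → j ≤ T → ∫ x, h x ∂μ i ≤ ∫ x, h x ∂μ j) :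
    (∀ n : ℕ, ∀ i ≤ T, IsProbabilityMeasure (gridMeasure n (μ i))) ∧
    (∀ n : ℕ, ∀ i ≤ T,
      gridMeasure n (μ i) {x : ℝ | ¬∃ k : ℕ, x = (k : ℝ) / 2 ^ n} = 0) ∧
    (∀ i ≤ T, ∀ f : ℝ → ℝ, Continuous f → (∃ B : ℝ, ∀ x, |f x| ≤ B) →
      Filter.Tendsto (fun n => ∫ x, f x ∂(gridMeasure n (μ i))) Filter.atTop
        (nhds (∫ x, f x ∂(μ i)))) ∧
    (∀ n : ℕ, ∀ h : ℝ → ℝ, ConvexOn ℝ (Set.Ici 0) h →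
      (∀ i ≤ T, Integrable h (gridMeasure n (μ i))) →
      ∀ i j, i ≤ j → j ≤ T →
        ∫ x, h x ∂(gridMeasure n (μ i)) ≤ ∫ x, h x ∂(gridMeasure n (μ j))) := by
  have hPM : ∀ n : ℕ, ∀ i ≤ T, IsProbabilityMeasure (gridMeasure n (μ i)) := by
    intro n i hi
    haveI := hprob i hi
    exact ⟨by rw [gridMeasure_univ (hsupp i hi), measure_univ]⟩
  refine ⟨hPM, ?_, ?_, ?_⟩
  · -- supported on the grid
    intro n i hi
    haveI := hprob i hi
    set S : Set ℝ := {x : ℝ | ¬∃ k : ℕ, x = (k : ℝ) / 2 ^ n} with hSdef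
    have hS : MeasurableSet S := by
      have : S = (⋃ k : ℕ, {((k : ℝ) / 2 ^ n)})ᶜ := by
        ext x; simp [hSdef, eq_comm]
      rw [this]
      exact (MeasurableSet.iUnion fun k => measurableSet_singleton _).compl
    rw [gridMeasure_eq, Measure.sum_apply _ hS]
    have hz : ∀ k : ℕ, Measure.dirac ((k : ℝ) / 2 ^ n) S = 0 := by
      intro k
      rw [Measure.dirac_apply' _ hS]
      apply Set.indicator_of_notMem
      simp [hSdef]
    simp only [Measure.smul_apply, smul_eq_mul, hz, mul_zero, tsum_zero]
  · -- weak convergence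
    rintro i hi f hf ⟨B, hB⟩
    haveI := hprob i hi
    have hμ0 := hsupp i hi
    have hint : ∀ n : ℕ, Integrable f (gridMeasure n (μ i)) := by
      intro n
      haveI := hPM n i hi
      refine (integrable_const B).mono' hf.aestronglyMeasurable ?_
      exact Filter.Eventually.of_forall fun x => by rw [Real.norm_eq_abs]; exact hB x
    have heq : (fun n => ∫ x, f x ∂(gridMeasure n (μ i)))
        = fun n => ∫ x, interp f n x ∂(μ i) := by
      funext n
      haveI := hPM n i hi
      exact integral_grid_eq hμ0 f (hint n)
    rw [heq]
    refine tendsto_integral_of_dominated_convergence (fun _ => B)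
      (fun n => (measurable_interp f n).aestronglyMeasurable) (integrable_const B)
      (fun n => ?_) ?_
    · filter_upwards [ae_nonneg hμ0] with x hx
      set m := ⌊2 ^ n * x⌋₊
      set t : ℝ := 2 ^ n * x - (m : ℝ) with ht
      have h1 : (0:ℝ) ≤ t := by have := floor_le' n x hx; simp [ht]; linarith
      have h2 : t ≤ 1 := by have := lt_floor_add_one' n x; simp [ht]; linarith
      have he : interp f n x = f ((m : ℝ) / 2 ^ n) * (1 - t) + f (((m : ℝ) + 1) / 2 ^ n) * t := by
        unfold interp; ring
      rw [he, Real.norm_eq_abs, abs_le]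
      have b1 := abs_le.mp (hB ((m : ℝ) / 2 ^ n))
      have b2 := abs_le.mp (hB (((m : ℝ) + 1) / 2 ^ n))
      constructor <;> nlinarith
    · filter_upwards [ae_nonneg hμ0] with x hx
      exact interp_tendsto f hf hx
  · -- convex order of discretizations
    intro n h hconv hint i j hij hjT
    have hiT := hij.trans hjT
    haveI := hprob i hiT
    haveI := hprob j hjT
    rw [integral_grid_eq (hsupp i hiT) h (hint i hiT),
      integral_grid_eq (hsupp j hjT) h (hint j hjT)]
    refine hconvord (interp h n) (convexOn_interp hconv n) (fun i' hi' => ?_) i j hij hjT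
    haveI := hprob i' hi'
    exact integrable_interp (hsupp i' hi') h (hint i' hi')
end

section
/- With notation as in the previous statement: for any function $h: \mathbb{R}_+ \to \mathbb{R}$, letting $h^n$ be the piecewise linear function with $h^n(k/2^n) = h(k/2^n)$ for $k \in \mathbb{N} \cup \{0\}$ and linear interpolation in between, one has $\int_{\mathbb{R}_+} h\, d\mu_i^n = \int_{\mathbb{R}_+} h^n\, d\mu_i$ (whenever both sides are defined). -/
open MeasureTheory

/-- The piecewise-linear interpolant of `h` at the dyadic grid points of mesh `2⁻ⁿ`. -/
noncomputable def interp (n : ℕ) (h : ℝ → ℝ) (x : ℝ) : ℝ :=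
  (1 + (⌊(2 : ℝ) ^ n * x⌋ : ℝ) - 2 ^ n * x) * h ((⌊(2 : ℝ) ^ n * x⌋ : ℝ) / 2 ^ n) +
  (2 ^ n * x - (⌊(2 : ℝ) ^ n * x⌋ : ℝ)) * h ((1 + (⌊(2 : ℝ) ^ n * x⌋ : ℝ)) / 2 ^ n)

/-- Coefficient `a k`: integral of the downward slope over `[k/2ⁿ, (k+1)/2ⁿ)`. -/
noncomputable def aCoef (n : ℕ) (μ : Measure ℝ) (k : ℕ) : ℝ :=
  ∫ x in Set.Ico ((k : ℝ) / 2 ^ n) (((k : ℝ) + 1) / 2 ^ n), (1 + (k : ℝ) - 2 ^ n * x) ∂μ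

/-- Coefficient `b k`: integral of the upward slope over `[(k-1)/2ⁿ, k/2ⁿ)`. -/
noncomputable def bCoef (n : ℕ) (μ : Measure ℝ) (k : ℕ) : ℝ :=
  ∫ x in Set.Ico (((k : ℝ) - 1) / 2 ^ n) ((k : ℝ) / 2 ^ n), (2 ^ n * x + 1 - (k : ℝ)) ∂μ

lemma gridMeasure_def (n : ℕ) (μ : Measure ℝ) :
    gridMeasure n μ = Measure.sum fun k : ℕ =>
      ENNReal.ofReal (bCoef n μ k + aCoef n μ k) • Measure.dirac ((k : ℝ) / 2 ^ n) := rfl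

lemma floor_eq_on_Ico (n k : ℕ) {x : ℝ}
    (hx : x ∈ Set.Ico ((k : ℝ) / 2 ^ n) (((k : ℝ) + 1) / 2 ^ n)) :
    ⌊(2 : ℝ) ^ n * x⌋ = (k : ℤ) := by
  have hpow : (0 : ℝ) < 2 ^ n := by positivity
  obtain ⟨h1, h2⟩ := hx
  have h1' : (k : ℝ) ≤ 2 ^ n * x := by
    have := (div_le_iff₀ hpow).mp h1; linarith [this, mul_comm x ((2:ℝ)^n)]
  have h2' : 2 ^ n * x < (k : ℝ) + 1 := by
    have := (lt_div_iff₀ hpow).mp h2; linarith [this, mul_comm x ((2:ℝ)^n)]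
  rw [Int.floor_eq_iff]
  constructor
  · exact_mod_cast h1'
  · push_cast; exact h2'

lemma interp_eq_on_Ico (n k : ℕ) (h : ℝ → ℝ) {x : ℝ}
    (hx : x ∈ Set.Ico ((k : ℝ) / 2 ^ n) (((k : ℝ) + 1) / 2 ^ n)) :
    interp n h x = (1 + (k : ℝ) - 2 ^ n * x) * h ((k : ℝ) / 2 ^ n) +
      (2 ^ n * x - (k : ℝ)) * h (((k : ℝ) + 1) / 2 ^ n) := by
  unfold interp
  rw [floor_eq_on_Ico n k hx]
  push_cast
  rw [add_comm (1 : ℝ) (k : ℝ)]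

lemma iUnion_Ico_eq (n : ℕ) :
    (⋃ k : ℕ, Set.Ico ((k : ℝ) / 2 ^ n) (((k : ℝ) + 1) / 2 ^ n)) = Set.Ici 0 := by
  have hpow : (0 : ℝ) < 2 ^ n := by positivity
  ext x
  simp only [Set.mem_iUnion, Set.mem_Ico, Set.mem_Ici]
  constructor
  · rintro ⟨k, h1, h2⟩
    exact le_trans (by positivity) h1
  · intro hx
    refine ⟨⌊(2 : ℝ) ^ n * x⌋.toNat, ?_, ?_⟩
    · have h0 : (0 : ℤ) ≤ ⌊(2 : ℝ) ^ n * x⌋ := Int.floor_nonneg.mpr (by positivity)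
      have hc : ((⌊(2 : ℝ) ^ n * x⌋.toNat : ℕ) : ℝ) = ((⌊(2 : ℝ) ^ n * x⌋ : ℤ) : ℝ) := by
        exact_mod_cast Int.toNat_of_nonneg h0
      rw [hc, div_le_iff₀ hpow]
      have := Int.floor_le ((2 : ℝ) ^ n * x)
      linarith [mul_comm x ((2:ℝ)^n)]
    · have h0 : (0 : ℤ) ≤ ⌊(2 : ℝ) ^ n * x⌋ := Int.floor_nonneg.mpr (by positivity)
      have hc : ((⌊(2 : ℝ) ^ n * x⌋.toNat : ℕ) : ℝ) = ((⌊(2 : ℝ) ^ n * x⌋ : ℤ) : ℝ) := by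
        exact_mod_cast Int.toNat_of_nonneg h0
      rw [hc, lt_div_iff₀ hpow]
      have := Int.lt_floor_add_one ((2 : ℝ) ^ n * x)
      linarith [mul_comm x ((2:ℝ)^n)]

/-- The interpolation identity: integrating `h` against the grid discretization `μⁿ`
equals integrating the piecewise-linear interpolant `hⁿ` against `μ`. -/
theorem stmt4 (n : ℕ) (μ : Measure ℝ) (hprob : IsProbabilityMeasure μ)
    (hsupp : μ (Set.Iio 0) = 0) (h : ℝ → ℝ)
    (hint1 : Integrable h (gridMeasure n μ))
    (hint2 : Integrable (interp n h) μ) :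
    ∫ x, h x ∂(gridMeasure n μ) = ∫ x, interp n h x ∂μ := by
  have hpow : (0 : ℝ) < 2 ^ n := by positivity
  set I : ℕ → Set ℝ := fun k => Set.Ico ((k : ℝ) / 2 ^ n) (((k : ℝ) + 1) / 2 ^ n) with hI
  -- nonnegativity of coefficients
  have hanneg : ∀ k, 0 ≤ aCoef n μ k := by
    intro k
    refine setIntegral_nonneg measurableSet_Ico fun x hx => ?_
    have := (lt_div_iff₀ hpow).mp hx.2
    nlinarith [mul_comm x ((2:ℝ)^n)]
  have hbnneg : ∀ k, 0 ≤ bCoef n μ k := by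
    intro k
    refine setIntegral_nonneg measurableSet_Ico fun x hx => ?_
    have := (div_le_iff₀ hpow).mp hx.1
    nlinarith [mul_comm x ((2:ℝ)^n)]
  have hcnneg : ∀ k, 0 ≤ bCoef n μ k + aCoef n μ k := fun k =>
    add_nonneg (hbnneg k) (hanneg k)
  -- LHS computation
  have hLHS : ∫ x, h x ∂(gridMeasure n μ)
      = ∑' k : ℕ, (bCoef n μ k + aCoef n μ k) * h ((k : ℝ) / 2 ^ n) := by
    rw [gridMeasure_def] at hint1 ⊢
    rw [integral_sum_measure hint1]
    congr 1
    ext k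
    rw [integral_smul_measure, integral_dirac, ENNReal.toReal_ofReal (hcnneg k),
      smul_eq_mul]
  -- summability from hint1
  have hfin : (∑' k : ℕ, ENNReal.ofReal (bCoef n μ k + aCoef n μ k) *
      (‖h ((k : ℝ) / 2 ^ n)‖₊ : ENNReal)) ≠ ⊤ := by
    have h2 := hint1.2
    rw [HasFiniteIntegral, gridMeasure_def, lintegral_sum_measure] at h2
    simp only [lintegral_smul_measure, lintegral_dirac] at h2
    exact h2.ne
  have hsumabs : Summable (fun k : ℕ =>
      (bCoef n μ k + aCoef n μ k) * |h ((k : ℝ) / 2 ^ n)|) := by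
    have hs := ENNReal.summable_toReal hfin
    refine hs.congr fun k => ?_
    rw [ENNReal.toReal_mul, ENNReal.toReal_ofReal (hcnneg k), ENNReal.coe_toReal,
      coe_nnnorm, Real.norm_eq_abs]
  have hsum_ah : Summable (fun k : ℕ => aCoef n μ k * h ((k : ℝ) / 2 ^ n)) := by
    apply Summable.of_abs
    refine Summable.of_nonneg_of_le (fun k => abs_nonneg _) (fun k => ?_) hsumabs
    rw [abs_mul, abs_of_nonneg (hanneg k)]
    exact mul_le_mul_of_nonneg_right (by linarith [hbnneg k]) (abs_nonneg _)
  have hsum_bh : Summable (fun k : ℕ => bCoef n μ k * h ((k : ℝ) / 2 ^ n)) := by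
    apply Summable.of_abs
    refine Summable.of_nonneg_of_le (fun k => abs_nonneg _) (fun k => ?_) hsumabs
    rw [abs_mul, abs_of_nonneg (hbnneg k)]
    exact mul_le_mul_of_nonneg_right (by linarith [hanneg k]) (abs_nonneg _)
  have hsum_bh' : Summable (fun k : ℕ => bCoef n μ (k + 1) * h (((k : ℝ) + 1) / 2 ^ n)) := by
    have := (summable_nat_add_iff 1).mpr hsum_bh
    refine this.congr fun k => ?_
    push_cast
    ring_nf
  -- b 0 = 0
  have hb0 : bCoef n μ 0 = 0 := by
    unfold bCoef
    have hnull : μ (Set.Ico ((((0 : ℕ) : ℝ) - 1) / 2 ^ n) (((0 : ℕ) : ℝ) / 2 ^ n)) = 0 := by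
      refine measure_mono_null (fun x hx => ?_) hsupp
      have hx2 := hx.2
      simp only [Nat.cast_zero, zero_div] at hx2
      exact hx2
    rw [Measure.restrict_eq_zero.mpr hnull, integral_zero_measure]
  -- b shifted
  have hbshift : ∀ k : ℕ, bCoef n μ (k + 1)
      = ∫ x in I k, (2 ^ n * x - (k : ℝ)) ∂μ := by
    intro k
    unfold bCoef
    rw [hI]
    have e1 : (((k + 1 : ℕ) : ℝ) - 1) / 2 ^ n = (k : ℝ) / 2 ^ n := by push_cast; ring_nf
    have e2 : ((k + 1 : ℕ) : ℝ) / 2 ^ n = ((k : ℝ) + 1) / 2 ^ n := by push_cast; ring_nf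
    rw [e1, e2]
    congr 1
    ext x
    push_cast
    ring
  -- integrability of the affine pieces
  have hfaff1 : ∀ k : ℕ, Integrable (fun x => (1 + (k : ℝ) - 2 ^ n * x)) (μ.restrict (I k)) := by
    intro k
    refine Integrable.mono' (integrable_const 1)
      ((Continuous.aestronglyMeasurable (by fun_prop))) ?_
    filter_upwards [ae_restrict_mem measurableSet_Ico] with x hx
    rw [Real.norm_eq_abs, abs_le]
    have h1 := (div_le_iff₀ hpow).mp hx.1
    have h2 := (lt_div_iff₀ hpow).mp hx.2
    constructor <;> nlinarith [mul_comm x ((2:ℝ)^n)]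
  have hfaff2 : ∀ k : ℕ, Integrable (fun x => (2 ^ n * x - (k : ℝ))) (μ.restrict (I k)) := by
    intro k
    refine Integrable.mono' (integrable_const 1)
      ((Continuous.aestronglyMeasurable (by fun_prop))) ?_
    filter_upwards [ae_restrict_mem measurableSet_Ico] with x hx
    rw [Real.norm_eq_abs, abs_le]
    have h1 := (div_le_iff₀ hpow).mp hx.1
    have h2 := (lt_div_iff₀ hpow).mp hx.2
    constructor <;> nlinarith [mul_comm x ((2:ℝ)^n)]
  -- each piece of the RHS
  have hterm : ∀ k : ℕ, ∫ x in I k, interp n h x ∂μ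
      = aCoef n μ k * h ((k : ℝ) / 2 ^ n)
        + bCoef n μ (k + 1) * h (((k : ℝ) + 1) / 2 ^ n) := by
    intro k
    rw [setIntegral_congr_fun measurableSet_Ico
      (fun x hx => interp_eq_on_Ico n k h hx)]
    rw [integral_add ((hfaff1 k).mul_const _) ((hfaff2 k).mul_const _),
      integral_mul_const, integral_mul_const, hbshift k]
    rfl
  -- the intervals are measurable & pairwise disjoint, covering Ici 0
  have hmeas : ∀ k : ℕ, MeasurableSet (I k) := fun k => measurableSet_Ico
  have hkey : ∀ i j : ℕ, i < j → Disjoint (I i) (I j) := by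
    intro i j hlt
    rw [Set.disjoint_left]
    rintro x ⟨hx1, hx2⟩ ⟨hy1, hy2⟩
    have hij' : ((i : ℝ) + 1) ≤ (j : ℝ) := by exact_mod_cast hlt
    have : ((i : ℝ) + 1) / 2 ^ n ≤ (j : ℝ) / 2 ^ n := by gcongr
    linarith
  have hdisj : Pairwise (Function.onFun Disjoint I) := by
    intro i j hij
    rcases Nat.lt_or_ge i j with hlt | hge
    · exact hkey i j hlt
    · exact (hkey j i (by omega)).symm
  -- restrict to Ici 0
  have hres : μ.restrict (Set.Ici (0 : ℝ)) = μ := by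
    apply Measure.restrict_eq_self_of_ae_mem
    rw [Filter.eventually_iff, mem_ae_iff]
    have : {x : ℝ | x ∈ Set.Ici (0:ℝ)}ᶜ = Set.Iio 0 := by
      ext x; simp [Set.mem_Ici, Set.mem_Iio, not_le]
    rw [this]
    exact hsupp
  -- RHS computation
  have hRHS : ∫ x, interp n h x ∂μ
      = ∑' k : ℕ, ∫ x in I k, interp n h x ∂μ := by
    conv_lhs => rw [← hres, ← iUnion_Ico_eq n]
    exact integral_iUnion hmeas hdisj
      (by rw [iUnion_Ico_eq n]; exact hint2.integrableOn)
  rw [hLHS, hRHS]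
  calc ∑' k : ℕ, (bCoef n μ k + aCoef n μ k) * h ((k : ℝ) / 2 ^ n)
      = ∑' k : ℕ, (bCoef n μ k * h ((k : ℝ) / 2 ^ n)
          + aCoef n μ k * h ((k : ℝ) / 2 ^ n)) := by
        exact tsum_congr fun k => add_mul _ _ _
    _ = (∑' k : ℕ, bCoef n μ k * h ((k : ℝ) / 2 ^ n))
          + ∑' k : ℕ, aCoef n μ k * h ((k : ℝ) / 2 ^ n) := Summable.tsum_add hsum_bh hsum_ah
    _ = (∑' k : ℕ, bCoef n μ (k + 1) * h (((k : ℝ) + 1) / 2 ^ n))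
          + ∑' k : ℕ, aCoef n μ k * h ((k : ℝ) / 2 ^ n) := by
        congr 1
        rw [Summable.tsum_eq_zero_add hsum_bh, hb0, zero_mul, zero_add]
        exact tsum_congr fun k => by push_cast; ring_nf
    _ = ∑' k : ℕ, (aCoef n μ k * h ((k : ℝ) / 2 ^ n)
          + bCoef n μ (k + 1) * h (((k : ℝ) + 1) / 2 ^ n)) := by
        rw [add_comm, Summable.tsum_add hsum_ah hsum_bh']
    _ = ∑' k : ℕ, ∫ x in I k, interp n h x ∂μ := tsum_congr fun k => (hterm k).symm
end

section
/- Let $(\Omega, \mathcal{F}, (\mathcal{F}_t)_{t=0}^T)$ be a finite filtered space and let $f = (f_t)_{t=0}^T$ be an adapted real-valued process. Let $\mathcal{R}$ be a set of probability measures on $\Omega$ that is stable under pasting (closed under the recursive one-step structure: $\mathcal{R}$ is formed from one-step kernel families $\mathcal{R}_t(\omega)$). Define the upper value $X_t = \inf_{\tau \in \mathcal{T}_t} \mathcal{E}_t[f_\tau]$ where $\mathcal{E}_t[\xi](\omega) = \sup_{P \in \mathfrak{R}_t(\omega)} E_P[\xi]$. Then $X$ satisfies the backward dynamic programming recursion $X_T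 = f_T$ and $X_t = f_t \wedge \mathcal{E}_t(X_{t+1})$ for $t = T-1, \ldots, 0$. -/
/-! Adverse optimal stopping for nonlinear expectations on the product path space
`Ω = Ω₁^ℕ` (coordinates `0, …, T-1` are observed at times `1, …, T`), with `Ω₁` finite.
`R t ω` is the set of one-step transition laws available at time `t` in state `ω`;
the pasting-stable family `𝔯_t(ω)` is encoded by the recursively defined nonlinear
conditional expectation `NE`. -/

/-- The nonlinear conditional expectation `𝓔_t[ξ](ω) = sup_{P ∈ 𝔯_t(ω)} E_P[ξ(ω^t, ·)]`
obtained by backward recursion over the one-step kernel sets `R`. -/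
noncomputable def NE {Ω₁ : Type*} [Fintype Ω₁] (T : ℕ)
    (R : ℕ → (ℕ → Ω₁) → Set (Ω₁ → ℝ)) (t : ℕ) (ξ : (ℕ → Ω₁) → ℝ) : (ℕ → Ω₁) → ℝ :=
  if h : T ≤ t then ξ
  else fun ω =>
    sSup ((fun P : Ω₁ → ℝ =>
      ∑ x : Ω₁, P x * NE T R (t + 1) ξ (Function.update ω t x)) '' R t ω)
termination_by T - t
decreasing_by omega

/-- Stopping times of the raw filtration with values in `[t, T]`. -/
def IsStopAt {Ω₁ : Type*} (T t : ℕ) (τ : (ℕ → Ω₁) → ℕ) : Prop :=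
  (∀ ω, t ≤ τ ω ∧ τ ω ≤ T) ∧
  ∀ s : ℕ, ∀ ω ω' : ℕ → Ω₁, (∀ j, j < s → ω j = ω' j) → τ ω = s → τ ω' = s

/-- An adapted payoff process: `f t` depends only on the first `t` coordinates. -/
def AdaptedProc {Ω₁ : Type*} (T : ℕ) (f : ℕ → (ℕ → Ω₁) → ℝ) : Prop :=
  ∀ t ≤ T, ∀ ω ω' : ℕ → Ω₁, (∀ j, j < t → ω j = ω' j) → f t ω = f t ω'

/-- The one-step kernel sets are nonempty convex-free families of probability vectors,
depending only on the past. -/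
def GoodKernels {Ω₁ : Type*} [Fintype Ω₁] (T : ℕ)
    (R : ℕ → (ℕ → Ω₁) → Set (Ω₁ → ℝ)) : Prop :=
  ∀ t, t < T → ∀ ω : ℕ → Ω₁,
    (R t ω).Nonempty ∧
    (∀ P ∈ R t ω, (∀ x, 0 ≤ P x) ∧ ∑ x : Ω₁, P x = 1) ∧
    (∀ ω' : ℕ → Ω₁, (∀ j, j < t → ω j = ω' j) → R t ω = R t ω')

/-- The upper value process `X t = inf_{τ ∈ 𝒯_t} 𝓔_t[f_τ]`. -/
noncomputable def upValue {Ω₁ : Type*} [Fintype Ω₁] (T : ℕ)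
    (R : ℕ → (ℕ → Ω₁) → Set (Ω₁ → ℝ)) (f : ℕ → (ℕ → Ω₁) → ℝ) (t : ℕ) :
    (ℕ → Ω₁) → ℝ :=
  fun ω => ⨅ τ : {τ : (ℕ → Ω₁) → ℕ // IsStopAt T t τ},
    NE T R t (fun ω' => f (τ.1 ω') ω') ω

set_option linter.unusedSectionVars false
set_option linter.unusedVariables false

section Aux
variable {Ω₁ : Type*} [Fintype Ω₁] [Nonempty Ω₁] {T : ℕ}
  {R : ℕ → (ℕ → Ω₁) → Set (Ω₁ → ℝ)}

lemma NE_eq_of_ge {t : ℕ} (h : T ≤ t) (ξ : (ℕ → Ω₁) → ℝ) :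
    NE T R t ξ = ξ := by rw [NE]; exact dif_pos h

lemma NE_eq_of_lt {t : ℕ} (h : t < T) (ξ : (ℕ → Ω₁) → ℝ) (ω : ℕ → Ω₁) :
    NE T R t ξ ω = sSup ((fun P : Ω₁ → ℝ =>
      ∑ x : Ω₁, P x * NE T R (t + 1) ξ (Function.update ω t x)) '' R t ω) := by
  rw [NE, dif_neg (by omega)]

lemma NE_bddAbove (hR : GoodKernels T R) {t : ℕ} (h : t < T) (ξ : (ℕ → Ω₁) → ℝ)
    (ω : ℕ → Ω₁) :
    BddAbove ((fun P : Ω₁ → ℝ =>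
      ∑ x : Ω₁, P x * NE T R (t + 1) ξ (Function.update ω t x)) '' R t ω) := by
  refine ⟨Finset.univ.sup' Finset.univ_nonempty
    (fun x => NE T R (t + 1) ξ (Function.update ω t x)), ?_⟩
  rintro _ ⟨P, hP, rfl⟩
  obtain ⟨hP0, hP1⟩ := (hR t h ω).2.1 P hP
  calc ∑ x : Ω₁, P x * NE T R (t + 1) ξ (Function.update ω t x)
      ≤ ∑ x : Ω₁, P x * Finset.univ.sup' Finset.univ_nonempty
          (fun x => NE T R (t + 1) ξ (Function.update ω t x)) := by
        refine Finset.sum_le_sum fun x _ => mul_le_mul_of_nonneg_left ?_ (hP0 x)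
        exact Finset.le_sup' (fun x => NE T R (t + 1) ξ (Function.update ω t x)) (Finset.mem_univ x)
    _ = _ := by rw [← Finset.sum_mul, hP1, one_mul]

lemma NE_const_aux (hR : GoodKernels T R) :
    ∀ n t, T - t ≤ n → ∀ (c : ℝ) (ω : ℕ → Ω₁), NE T R t (fun _ => c) ω = c := by
  intro n
  induction n with
  | zero =>
    intro t ht c ω
    rw [NE_eq_of_ge (by omega)]
  | succ n IH =>
    intro t ht c ω
    by_cases hT : T ≤ t
    · rw [NE_eq_of_ge hT]
    · have h : t < T := by omega
      rw [NE_eq_of_lt h]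
      have himg : (fun P : Ω₁ → ℝ =>
          ∑ x : Ω₁, P x * NE T R (t + 1) (fun _ => c) (Function.update ω t x)) '' R t ω
          = {c} := by
        rw [Set.image_congr (g := fun _ => c) ?_]
        · exact Set.Nonempty.image_const (hR t h ω).1 c
        · intro P hP
          have h1 := (hR t h ω).2.1 P hP
          have : ∀ x : Ω₁, NE T R (t + 1) (fun _ => c) (Function.update ω t x) = c :=
            fun x => IH (t + 1) (by omega) c _
          calc ∑ x : Ω₁, P x * NE T R (t + 1) (fun _ => c) (Function.update ω t x)
              = ∑ x : Ω₁, P x * c := by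
                exact Finset.sum_congr rfl fun x _ => by rw [this x]
            _ = c := by rw [← Finset.sum_mul, h1.2, one_mul]
      rw [himg, csSup_singleton]

lemma NE_const (hR : GoodKernels T R) (t : ℕ) (c : ℝ) (ω : ℕ → Ω₁) :
    NE T R t (fun _ => c) ω = c := NE_const_aux hR (T - t) t le_rfl c ω

lemma NE_congr_aux (hR : GoodKernels T R) :
    ∀ n t, T - t ≤ n → ∀ (ξ ξ' : (ℕ → Ω₁) → ℝ) (ω ω' : ℕ → Ω₁),
    (∀ j, j < t → ω j = ω' j) →
    (∀ p p' : ℕ → Ω₁, (∀ j, j < t → p j = ω j) → (∀ j, j < t → p' j = ω' j) →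
      (∀ j, t ≤ j → j < T → p j = p' j) → ξ p = ξ' p') →
    NE T R t ξ ω = NE T R t ξ' ω' := by
  intro n
  induction n with
  | zero =>
    intro t ht ξ ξ' ω ω' hωω' hpp
    rw [NE_eq_of_ge (by omega), NE_eq_of_ge (by omega)]
    exact hpp ω ω' (fun _ _ => rfl) (fun _ _ => rfl) (fun j h1 h2 => by omega)
  | succ n IH =>
    intro t ht ξ ξ' ω ω' hωω' hpp
    by_cases hT : T ≤ t
    · rw [NE_eq_of_ge hT, NE_eq_of_ge hT]
      exact hpp ω ω' (fun _ _ => rfl) (fun _ _ => rfl) (fun j h1 h2 => by omega)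
    · have h : t < T := by omega
      rw [NE_eq_of_lt h, NE_eq_of_lt h]
      rw [← (hR t h ω).2.2 ω' hωω']
      congr 1
      apply Set.image_congr
      intro P _
      refine Finset.sum_congr rfl fun x _ => ?_
      congr 1
      refine IH (t + 1) (by omega) ξ ξ' _ _ ?_ ?_
      · intro j hj
        rcases Nat.lt_succ_iff_lt_or_eq.mp hj with hj' | rfl
        · rw [Function.update_of_ne (by omega), Function.update_of_ne (by omega)]
          exact hωω' j hj'
        · simp
      · intro p p' hp hp' hmid
        refine hpp p p' ?_ ?_ ?_
        · intro j hj
          rw [hp j (by omega), Function.update_of_ne (by omega)]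
        · intro j hj
          rw [hp' j (by omega), Function.update_of_ne (by omega)]
        · intro j h1 h2
          rcases Nat.eq_or_lt_of_le h1 with heq | h1'
          · rw [hp j (by omega), hp' j (by omega), ← heq]
            simp
          · exact hmid j h1' h2

lemma NE_congr (hR : GoodKernels T R) {t : ℕ} {ξ ξ' : (ℕ → Ω₁) → ℝ} {ω ω' : ℕ → Ω₁}
    (hωω' : ∀ j, j < t → ω j = ω' j)
    (hpp : ∀ p p' : ℕ → Ω₁, (∀ j, j < t → p j = ω j) → (∀ j, j < t → p' j = ω' j) →
      (∀ j, t ≤ j → j < T → p j = p' j) → ξ p = ξ' p') :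
    NE T R t ξ ω = NE T R t ξ' ω' :=
  NE_congr_aux hR (T - t) t le_rfl ξ ξ' ω ω' hωω' hpp

lemma NE_mono_on_aux (hR : GoodKernels T R) :
    ∀ n t, T - t ≤ n → ∀ (ξ ξ' : (ℕ → Ω₁) → ℝ) (ω : ℕ → Ω₁),
    (∀ p : ℕ → Ω₁, (∀ j, j < t → p j = ω j) → ξ p ≤ ξ' p) →
    NE T R t ξ ω ≤ NE T R t ξ' ω := by
  intro n
  induction n with
  | zero =>
    intro t ht ξ ξ' ω hle
    rw [NE_eq_of_ge (by omega), NE_eq_of_ge (by omega)]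
    exact hle ω (fun _ _ => rfl)
  | succ n IH =>
    intro t ht ξ ξ' ω hle
    by_cases hT : T ≤ t
    · rw [NE_eq_of_ge hT, NE_eq_of_ge hT]
      exact hle ω (fun _ _ => rfl)
    · have h : t < T := by omega
      rw [NE_eq_of_lt h, NE_eq_of_lt h]
      refine csSup_le ((hR t h ω).1.image _) ?_
      rintro _ ⟨P, hP, rfl⟩
      have hprob := (hR t h ω).2.1 P hP
      calc ∑ x : Ω₁, P x * NE T R (t + 1) ξ (Function.update ω t x)
          ≤ ∑ x : Ω₁, P x * NE T R (t + 1) ξ' (Function.update ω t x) := by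
            refine Finset.sum_le_sum fun x _ => mul_le_mul_of_nonneg_left ?_ (hprob.1 x)
            refine IH (t + 1) (by omega) ξ ξ' _ ?_
            intro p hp
            refine hle p fun j hj => ?_
            rw [hp j (by omega), Function.update_of_ne (by omega)]
        _ ≤ _ := le_csSup (NE_bddAbove hR h ξ' ω) (Set.mem_image_of_mem _ hP)

lemma NE_mono_on (hR : GoodKernels T R) {t : ℕ} {ξ ξ' : (ℕ → Ω₁) → ℝ} {ω : ℕ → Ω₁}
    (hle : ∀ p : ℕ → Ω₁, (∀ j, j < t → p j = ω j) → ξ p ≤ ξ' p) :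
    NE T R t ξ ω ≤ NE T R t ξ' ω :=
  NE_mono_on_aux hR (T - t) t le_rfl ξ ξ' ω hle

end Aux


section Main
variable {Ω₁ : Type*} [Fintype Ω₁] [Nonempty Ω₁] {T : ℕ}
  {R : ℕ → (ℕ → Ω₁) → Set (Ω₁ → ℝ)} {f : ℕ → (ℕ → Ω₁) → ℝ}

noncomputable def mBound (T : ℕ) (f : ℕ → (ℕ → Ω₁) → ℝ) : ℝ :=
  Finset.univ.inf' Finset.univ_nonempty
    (fun p : Fin (T + 1) × (Fin T → Ω₁) =>
      f p.1 (fun j => if h : j < T then p.2 ⟨j, h⟩ else Classical.arbitrary Ω₁))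

lemma mBound_le (hf : AdaptedProc T f) {s : ℕ} (hs : s ≤ T) (ω' : ℕ → Ω₁) :
    mBound T f ≤ f s ω' := by
  have h1 := Finset.inf'_le
    (fun p : Fin (T + 1) × (Fin T → Ω₁) =>
      f p.1 (fun j => if h : j < T then p.2 ⟨j, h⟩ else Classical.arbitrary Ω₁))
    (Finset.mem_univ (⟨⟨s, by omega⟩, fun j => ω' j.1⟩ : Fin (T + 1) × (Fin T → Ω₁)))
  refine h1.trans (le_of_eq ?_)
  refine hf s hs _ ω' fun j hj => ?_
  simp only
  rw [dif_pos (by omega : j < T)]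

lemma isStop_const {t : ℕ} (h : t ≤ T) : IsStopAt (Ω₁ := Ω₁) T t (fun _ => T) :=
  ⟨fun _ => ⟨h, le_rfl⟩, fun _ _ _ _ hs => hs⟩

lemma isStop_self {t : ℕ} (h : t ≤ T) : IsStopAt (Ω₁ := Ω₁) T t (fun _ => t) :=
  ⟨fun _ => ⟨le_rfl, h⟩, fun _ _ _ _ hs => hs⟩

lemma stop_nonempty {t : ℕ} (h : t ≤ T) :
    Nonempty {τ : (ℕ → Ω₁) → ℕ // IsStopAt T t τ} := ⟨⟨_, isStop_const h⟩⟩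

lemma bddBelow_stop (hR : GoodKernels T R) (hf : AdaptedProc T f) {t : ℕ} (ht : t ≤ T)
    (ω : ℕ → Ω₁) :
    BddBelow (Set.range fun τ : {τ : (ℕ → Ω₁) → ℕ // IsStopAt T t τ} =>
      NE T R t (fun ω' => f (τ.1 ω') ω') ω) := by
  refine ⟨mBound T f, ?_⟩
  rintro _ ⟨τ, rfl⟩
  have h1 : NE T R t (fun _ => mBound T f) ω = mBound T f := NE_const hR t _ ω
  rw [← h1]
  exact NE_mono_on hR fun p _ => mBound_le hf (τ.2.1 p).2 p


lemma upValue_meas (hR : GoodKernels T R) (hf : AdaptedProc T f) {t : ℕ} (ht : t ≤ T)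
    {p q : ℕ → Ω₁} (h : ∀ j, j < t → p j = q j) :
    upValue T R f t p = upValue T R f t q := by
  refine iInf_congr fun τ => ?_
  refine NE_congr hR h ?_
  intro r r' hr hr' hmid
  have hagree : ∀ j, j < T → r j = r' j := by
    intro j hj
    by_cases hjt : j < t
    · rw [hr j hjt, hr' j hjt]; exact h j hjt
    · exact hmid j (by omega) hj
  have hsT : τ.1 r ≤ T := (τ.2.1 r).2
  have h2 : τ.1 r' = τ.1 r := τ.2.2 (τ.1 r) r r' (fun j hj => hagree j (by omega)) rfl
  show f (τ.1 r) r = f (τ.1 r') r'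
  rw [h2]
  exact hf (τ.1 r) hsT r r' (fun j hj => hagree j (by omega))

lemma NE_upValue_step (hR : GoodKernels T R) (hf : AdaptedProc T f) {t : ℕ} (ht : t < T)
    (u : ℕ → Ω₁) :
    NE T R (t+1) (upValue T R f (t+1)) u = upValue T R f (t+1) u := by
  have e : NE T R (t+1) (upValue T R f (t+1)) u
      = NE T R (t+1) (fun _ => upValue T R f (t+1) u) u :=
    NE_congr hR (fun _ _ => rfl)
      (fun p p' hp hp' _ => upValue_meas hR hf (by omega) hp)
  rw [e, NE_const hR]

end Main

/-- Backward dynamic programming recursion for the adverse optimal stopping problem: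
`X T = f T` and `X t = min (f t) (𝓔_t X_{t+1})`. -/
theorem stmt9 {Ω₁ : Type*} [Fintype Ω₁] [Nonempty Ω₁] (T : ℕ)
    (R : ℕ → (ℕ → Ω₁) → Set (Ω₁ → ℝ)) (f : ℕ → (ℕ → Ω₁) → ℝ)
    (hR : GoodKernels T R) (hf : AdaptedProc T f) :
    (∀ ω, upValue T R f T ω = f T ω) ∧
    (∀ t, t < T → ∀ ω,
      upValue T R f t ω = min (f t ω) (NE T R t (upValue T R f (t + 1)) ω)) := by
  constructor
  · intro ω
    haveI := stop_nonempty (Ω₁ := Ω₁) (le_refl T)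
    have h1 : ∀ τ : {τ : (ℕ → Ω₁) → ℕ // IsStopAt T T τ},
        NE T R T (fun ω' => f (τ.1 ω') ω') ω = f T ω := by
      intro τ
      rw [NE_eq_of_ge le_rfl]
      have h2 : τ.1 ω = T := le_antisymm (τ.2.1 ω).2 (τ.2.1 ω).1
      simp only [h2]
    show (⨅ τ : {τ : (ℕ → Ω₁) → ℕ // IsStopAt T T τ},
        NE T R T (fun ω' => f (τ.1 ω') ω') ω) = f T ω
    rw [iInf_congr h1, ciInf_const]
  · intro t ht ω
    haveI : Nonempty {τ : (ℕ → Ω₁) → ℕ // IsStopAt T t τ} := stop_nonempty (by omega)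
    haveI : Nonempty {τ : (ℕ → Ω₁) → ℕ // IsStopAt T (t+1) τ} := stop_nonempty (by omega)
    apply le_antisymm
    · apply le_min
      · have h2 : NE T R t (fun ω' => f t ω') ω = f t ω := by
          have e : NE T R t (fun ω' => f t ω') ω = NE T R t (fun _ => f t ω) ω :=
            NE_congr hR (fun _ _ => rfl) (fun p p' hp hp' _ => hf t ht.le p ω hp)
          rw [e, NE_const hR]
        calc upValue T R f t ω
            ≤ NE T R t (fun ω' => f ((fun _ => t) ω') ω') ω :=
              ciInf_le (bddBelow_stop hR hf ht.le ω) ⟨fun _ => t, isStop_self ht.le⟩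
          _ = f t ω := h2
      · refine le_of_forall_pos_le_add fun ε hε => ?_
        have hch : ∀ x : Ω₁, ∃ τ : {τ : (ℕ → Ω₁) → ℕ // IsStopAt T (t+1) τ},
            NE T R (t+1) (fun ω' => f (τ.1 ω') ω') (Function.update ω t x)
              < upValue T R f (t+1) (Function.update ω t x) + ε := by
          intro x
          have h' : (⨅ τ : {τ : (ℕ → Ω₁) → ℕ // IsStopAt T (t+1) τ},
              NE T R (t+1) (fun ω' => f (τ.1 ω') ω') (Function.update ω t x))
              < upValue T R f (t+1) (Function.update ω t x) + ε := by
            have : upValue T R f (t+1) (Function.update ω t x)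
                < upValue T R f (t+1) (Function.update ω t x) + ε := by linarith
            exact this
          exact exists_lt_of_ciInf_lt h'
        choose τs hτs using hch
        set τstar : (ℕ → Ω₁) → ℕ := fun p => (τs (p t)).1 p with hτstar
        have hstar : IsStopAt T t τstar := by
          constructor
          · intro p
            exact ⟨le_trans (Nat.le_succ t) ((τs (p t)).2.1 p).1, ((τs (p t)).2.1 p).2⟩
          · intro s ω₁ ω₂ hagree h1
            have hs : t + 1 ≤ s := by rw [← h1]; exact ((τs (ω₁ t)).2.1 ω₁).1
            have hxt : ω₁ t = ω₂ t := hagree t (by omega)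
            have h3 := (τs (ω₁ t)).2.2 s ω₁ ω₂ hagree h1
            rw [hτstar]; simp only; rw [← hxt]; exact h3
        have step1 : upValue T R f t ω ≤ NE T R t (fun ω' => f (τstar ω') ω') ω :=
          ciInf_le (bddBelow_stop hR hf ht.le ω) ⟨τstar, hstar⟩
        refine step1.trans ?_
        rw [NE_eq_of_lt ht]
        refine csSup_le ((hR t ht ω).1.image _) ?_
        rintro _ ⟨P, hP, rfl⟩
        have hprob := (hR t ht ω).2.1 P hP
        have key : ∀ x : Ω₁,
            NE T R (t+1) (fun ω' => f (τstar ω') ω') (Function.update ω t x)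
            = NE T R (t+1) (fun ω' => f ((τs x).1 ω') ω') (Function.update ω t x) := by
          intro x
          refine NE_congr hR (fun _ _ => rfl) ?_
          intro p p' hp hp' hmid
          have hagree : ∀ j, j < T → p j = p' j := by
            intro j hj
            by_cases hjt : j < t + 1
            · rw [hp j hjt, hp' j hjt]
            · exact hmid j (by omega) hj
          have hpt : p t = x := by rw [hp t (by omega)]; simp
          have h1 : τstar p = (τs x).1 p := by rw [hτstar]; simp only; rw [hpt]
          have hsT : (τs x).1 p ≤ T := ((τs x).2.1 p).2
          have h2 : (τs x).1 p' = (τs x).1 p :=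
            (τs x).2.2 ((τs x).1 p) p p' (fun j hj => hagree j (by omega)) rfl
          show f (τstar p) p = f ((τs x).1 p') p'
          rw [h1, h2]
          exact hf ((τs x).1 p) hsT p p' (fun j hj => hagree j (by omega))
        calc ∑ x : Ω₁, P x * NE T R (t+1) (fun ω' => f (τstar ω') ω') (Function.update ω t x)
            ≤ ∑ x : Ω₁, P x * (upValue T R f (t+1) (Function.update ω t x) + ε) := by
              refine Finset.sum_le_sum fun x _ => mul_le_mul_of_nonneg_left ?_ (hprob.1 x)
              rw [key x]; exact le_of_lt (hτs x)
          _ = (∑ x : Ω₁, P x * upValue T R f (t+1) (Function.update ω t x)) + ε := by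
              rw [Finset.sum_congr rfl (fun x _ => mul_add (P x) _ ε),
                Finset.sum_add_distrib, ← Finset.sum_mul, hprob.2, one_mul]
          _ ≤ NE T R t (upValue T R f (t+1)) ω + ε := by
              refine (add_le_add_iff_right ε).mpr ?_
              rw [NE_eq_of_lt ht]
              have hsum : ∑ x : Ω₁, P x * upValue T R f (t+1) (Function.update ω t x)
                  = ∑ x : Ω₁, P x * NE T R (t+1) (upValue T R f (t+1)) (Function.update ω t x) :=
                Finset.sum_congr rfl fun x _ => by rw [NE_upValue_step hR hf ht]
              rw [hsum]
              exact le_csSup (NE_bddAbove hR ht _ ω) (Set.mem_image_of_mem _ hP)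
    · refine le_ciInf fun τp => ?_
      obtain ⟨τ, hτ⟩ := τp
      by_cases hstop : τ ω = t
      · have heq : NE T R t (fun ω' => f (τ ω') ω') ω = f t ω := by
          have e : NE T R t (fun ω' => f (τ ω') ω') ω = NE T R t (fun _ => f t ω) ω := by
            refine NE_congr hR (fun _ _ => rfl) ?_
            intro p p' hp hp' _
            have hpt : τ p = t := hτ.2 t ω p (fun j hj => (hp j hj).symm) hstop
            simp only [hpt]
            exact hf t ht.le p ω hp
          rw [e, NE_const hR]
        show min (f t ω) (NE T R t (upValue T R f (t + 1)) ω)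
            ≤ NE T R t (fun ω' => f (τ ω') ω') ω
        rw [heq]
        exact min_le_left _ _
      · have hge : ∀ p : ℕ → Ω₁, (∀ j, j < t → p j = ω j) → t + 1 ≤ τ p := by
          intro p hp
          have h1 := (hτ.1 p).1
          rcases Nat.eq_or_lt_of_le h1 with heq | h2
          · exact absurd (hτ.2 t p ω hp heq.symm) hstop
          · omega
        set τ' : (ℕ → Ω₁) → ℕ := fun p => max (t+1) (τ p) with hτ'def
        have hτ' : IsStopAt T (t+1) τ' := by
          constructor
          · intro p
            refine ⟨le_max_left _ _, ?_⟩
            have h1 := (hτ.1 p).2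
            rw [hτ'def]; simp only; omega
          · intro s ω₁ ω₂ hagree h1
            have hb := (hτ.1 ω₁).1
            rw [hτ'def] at h1 ⊢
            simp only at h1 ⊢
            rcases Nat.lt_or_ge (τ ω₁) (t+1) with hc | hc
            · have hτω₁ : τ ω₁ = t := by omega
              have h3 : τ ω₂ = t := hτ.2 t ω₁ ω₂ (fun j hj => hagree j (by omega)) hτω₁
              omega
            · have hτs : τ ω₁ = s := by omega
              have h3 : τ ω₂ = s := hτ.2 s ω₁ ω₂ hagree hτs
              omega
        have hmain : NE T R t (upValue T R f (t+1)) ω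
            ≤ NE T R t (fun ω' => f (τ ω') ω') ω := by
          rw [NE_eq_of_lt ht, NE_eq_of_lt ht]
          refine csSup_le ((hR t ht ω).1.image _) ?_
          rintro _ ⟨P, hP, rfl⟩
          have hprob := (hR t ht ω).2.1 P hP
          calc ∑ x : Ω₁, P x * NE T R (t+1) (upValue T R f (t+1)) (Function.update ω t x)
              ≤ ∑ x : Ω₁, P x * NE T R (t+1) (fun ω' => f (τ ω') ω') (Function.update ω t x) := by
                refine Finset.sum_le_sum fun x _ => mul_le_mul_of_nonneg_left ?_ (hprob.1 x)
                have e : NE T R (t+1) (fun ω' => f (τ' ω') ω') (Function.update ω t x)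
                    = NE T R (t+1) (fun ω' => f (τ ω') ω') (Function.update ω t x) := by
                  refine NE_congr hR (fun _ _ => rfl) ?_
                  intro p p' hp hp' hmid
                  have hagree : ∀ j, j < T → p j = p' j := by
                    intro j hj
                    by_cases hjt : j < t + 1
                    · rw [hp j hjt, hp' j hjt]
                    · exact hmid j (by omega) hj
                  have hcylp : ∀ j, j < t → p j = ω j := fun j hj => by
                    rw [hp j (by omega), Function.update_of_ne (by omega)]
                  have h1 : τ' p = τ p := by
                    rw [hτ'def]; simp only
                    have := hge p hcylp; omega
                  have hsT : τ p ≤ T := (hτ.1 p).2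
                  have h2 : τ p' = τ p := hτ.2 (τ p) p p' (fun j hj => hagree j (by omega)) rfl
                  show f (τ' p) p = f (τ p') p'
                  rw [h1, h2]
                  exact hf (τ p) hsT p p' (fun j hj => hagree j (by omega))
                rw [NE_upValue_step hR hf ht]
                calc upValue T R f (t+1) (Function.update ω t x)
                    ≤ NE T R (t+1) (fun ω' => f (τ' ω') ω') (Function.update ω t x) :=
                      ciInf_le (bddBelow_stop hR hf (by omega) _) ⟨τ', hτ'⟩
                  _ = _ := e
            _ ≤ _ := le_csSup (NE_bddAbove hR ht _ ω) (Set.mem_image_of_mem _ hP)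
        exact (min_le_right _ _).trans hmain
end

section
/- In the setting of adverse optimal stopping on a finite filtered space, the game has a value: $\inf_{\tau \in \mathcal{T}} \sup_{P \in \mathcal{R}} E_P[f_\tau] = \sup_{P \in \mathcal{R}} \inf_{\tau \in \mathcal{T}} E_P[f_\tau]$, where $\mathcal{R}$ is a pasting-stable family of probability measures built from one-step kernel families and $f$ is adapted. -/
/-- The linear expectation along a selection `σ` of one-step kernels
(i.e. under the pasted measure `P = σ 0 ⊗ σ 1 ⊗ ⋯ ⊗ σ (T-1)`). -/
noncomputable def PE {Ω₁ : Type*} [Fintype Ω₁] (T : ℕ)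
    (σ : ℕ → (ℕ → Ω₁) → (Ω₁ → ℝ)) (t : ℕ) (ξ : (ℕ → Ω₁) → ℝ) : (ℕ → Ω₁) → ℝ :=
  if h : T ≤ t then ξ
  else fun ω => ∑ x : Ω₁, σ t ω x * PE T σ (t + 1) ξ (Function.update ω t x)
termination_by T - t
decreasing_by omega

lemma NE_of_ge {Ω₁ : Type*} [Fintype Ω₁] {T t : ℕ} (R : ℕ → (ℕ → Ω₁) → Set (Ω₁ → ℝ))
    (ξ : (ℕ → Ω₁) → ℝ) (h : T ≤ t) : NE T R t ξ = ξ := by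
  rw [NE, dif_pos h]

lemma NE_of_lt {Ω₁ : Type*} [Fintype Ω₁] {T t : ℕ} (R : ℕ → (ℕ → Ω₁) → Set (Ω₁ → ℝ))
    (ξ : (ℕ → Ω₁) → ℝ) (h : t < T) (ω : ℕ → Ω₁) : NE T R t ξ ω =
      sSup ((fun P : Ω₁ → ℝ =>
        ∑ x : Ω₁, P x * NE T R (t + 1) ξ (Function.update ω t x)) '' R t ω) := by
  conv_lhs => rw [NE, dif_neg (not_le.2 h)]

lemma PE_of_ge {Ω₁ : Type*} [Fintype Ω₁] {T t : ℕ} (σ : ℕ → (ℕ → Ω₁) → (Ω₁ → ℝ))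
    (ξ : (ℕ → Ω₁) → ℝ) (h : T ≤ t) : PE T σ t ξ = ξ := by
  rw [PE, dif_pos h]

lemma PE_of_lt {Ω₁ : Type*} [Fintype Ω₁] {T t : ℕ} (σ : ℕ → (ℕ → Ω₁) → (Ω₁ → ℝ))
    (ξ : (ℕ → Ω₁) → ℝ) (h : t < T) (ω : ℕ → Ω₁) : PE T σ t ξ ω =
      ∑ x : Ω₁, σ t ω x * PE T σ (t + 1) ξ (Function.update ω t x) := by
  conv_lhs => rw [PE, dif_neg (not_le.2 h)]
section GameProof
open Function

variable {Ω₁ : Type*} [Fintype Ω₁] [Nonempty Ω₁]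

lemma prob_sum_le' {P g h : Ω₁ → ℝ} (h0 : ∀ x, 0 ≤ P x) (hle : ∀ x, g x ≤ h x) :
    ∑ x, P x * g x ≤ ∑ x, P x * h x :=
  Finset.sum_le_sum fun x _ => mul_le_mul_of_nonneg_left (hle x) (h0 x)

lemma prob_sum_abs' {P g : Ω₁ → ℝ} {B : ℝ} (h0 : ∀ x, 0 ≤ P x) (h1 : ∑ x, P x = 1)
    (hg : ∀ x, |g x| ≤ B) : |∑ x, P x * g x| ≤ B := by
  calc |∑ x, P x * g x| ≤ ∑ x, |P x * g x| := Finset.abs_sum_le_sum_abs _ _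
    _ = ∑ x, P x * |g x| := by
        refine Finset.sum_congr rfl fun x _ => ?_
        rw [abs_mul, abs_of_nonneg (h0 x)]
    _ ≤ ∑ x, P x * B := prob_sum_le' h0 hg
    _ = B := by rw [← Finset.sum_mul, h1, one_mul]

lemma prob_sum_const' {P : Ω₁ → ℝ} (h1 : ∑ x, P x = 1) (c : ℝ) :
    ∑ x, P x * c = c := by rw [← Finset.sum_mul, h1, one_mul]

lemma abs_sSup_le' {S : Set ℝ} {B : ℝ} (hne : S.Nonempty) (h : ∀ y ∈ S, |y| ≤ B) :
    |sSup S| ≤ B := by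
  rw [abs_le]
  obtain ⟨y, hy⟩ := hne
  constructor
  · exact le_trans (neg_le_of_abs_le (h y hy))
      (le_csSup ⟨B, fun z hz => le_of_abs_le (h z hz)⟩ hy)
  · exact csSup_le ⟨y, hy⟩ fun z hz => le_of_abs_le (h z hz)

lemma bddAbove_img' {t : ℕ} {R : ℕ → (ℕ → Ω₁) → Set (Ω₁ → ℝ)} {g : (ℕ → Ω₁) → ℝ} {B : ℝ}
    (hg : ∀ ω', |g ω'| ≤ B) (ω : ℕ → Ω₁)
    (hprob : ∀ P ∈ R t ω, (∀ x, 0 ≤ P x) ∧ ∑ x : Ω₁, P x = 1) :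
    BddAbove ((fun P : Ω₁ → ℝ => ∑ x : Ω₁, P x * g (Function.update ω t x)) '' R t ω) := by
  refine ⟨B, ?_⟩; rintro y ⟨P, hP, rfl⟩
  exact le_of_abs_le (prob_sum_abs' (hprob P hP).1 (hprob P hP).2 fun x => hg _)

lemma NE_abs {T : ℕ} {R : ℕ → (ℕ → Ω₁) → Set (Ω₁ → ℝ)} (hR : GoodKernels T R)
    {ξ : (ℕ → Ω₁) → ℝ} {B : ℝ} (hξ : ∀ ω, |ξ ω| ≤ B) :
    ∀ k t, T ≤ t + k → ∀ ω, |NE T R t ξ ω| ≤ B := by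
  intro k
  induction k with
  | zero => intro t ht ω; rw [NE_of_ge R ξ (by omega)]; exact hξ ω
  | succ k ih =>
    intro t ht ω
    by_cases h : T ≤ t
    · rw [NE_of_ge R ξ h]; exact hξ ω
    · push_neg at h
      rw [NE_of_lt R ξ h ω]
      obtain ⟨hne, hprob, -⟩ := hR t h ω
      refine abs_sSup_le' (hne.image _) ?_
      rintro y ⟨P, hP, rfl⟩
      exact prob_sum_abs' (hprob P hP).1 (hprob P hP).2 fun x => ih (t+1) (by omega) _

lemma NE_mono {T : ℕ} {R : ℕ → (ℕ → Ω₁) → Set (Ω₁ → ℝ)} (hR : GoodKernels T R)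
    {ξ ξ' : (ℕ → Ω₁) → ℝ} {B : ℝ} (hξ' : ∀ ω, |ξ' ω| ≤ B) (hle : ∀ ω, ξ ω ≤ ξ' ω) :
    ∀ k t, T ≤ t + k → ∀ ω, NE T R t ξ ω ≤ NE T R t ξ' ω := by
  intro k
  induction k with
  | zero => intro t ht ω; rw [NE_of_ge R ξ (by omega), NE_of_ge R ξ' (by omega)]; exact hle ω
  | succ k ih =>
    intro t ht ω
    by_cases h : T ≤ t
    · rw [NE_of_ge R ξ h, NE_of_ge R ξ' h]; exact hle ω
    · push_neg at h
      rw [NE_of_lt R ξ h ω, NE_of_lt R ξ' h ω]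
      obtain ⟨hne, hprob, -⟩ := hR t h ω
      refine csSup_le (hne.image _) ?_
      rintro y ⟨P, hP, rfl⟩
      refine le_trans (prob_sum_le' (hprob P hP).1 fun x => ih (t+1) (by omega) _) ?_
      exact le_csSup (bddAbove_img' (fun ω' => NE_abs hR hξ' T (t+1) (by omega) ω') ω hprob)
        ⟨P, hP, rfl⟩

lemma NE_local {T : ℕ} {R : ℕ → (ℕ → Ω₁) → Set (Ω₁ → ℝ)}
    {ξ ξ' : (ℕ → Ω₁) → ℝ} :
    ∀ k t, T ≤ t + k → ∀ ω, (∀ ω', (∀ j, j < t → ω' j = ω j) → ξ ω' = ξ' ω') →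
      NE T R t ξ ω = NE T R t ξ' ω := by
  intro k
  induction k with
  | zero => intro t ht ω hag; rw [NE_of_ge R ξ (by omega), NE_of_ge R ξ' (by omega)]
            exact hag ω fun j _ => rfl
  | succ k ih =>
    intro t ht ω hag
    by_cases h : T ≤ t
    · rw [NE_of_ge R ξ h, NE_of_ge R ξ' h]; exact hag ω fun j _ => rfl
    · push_neg at h
      rw [NE_of_lt R ξ h ω, NE_of_lt R ξ' h ω]
      congr 1
      refine Set.image_congr fun P _ => ?_
      refine Finset.sum_congr rfl fun x _ => ?_
      rw [ih (t+1) (by omega) (Function.update ω t x) ?_]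
      intro ω' hag'
      refine hag ω' fun j hj => ?_
      rw [hag' j (by omega), Function.update_of_ne (by omega)]

lemma NE_meas {T : ℕ} {R : ℕ → (ℕ → Ω₁) → Set (Ω₁ → ℝ)} (hR : GoodKernels T R)
    {ξ : (ℕ → Ω₁) → ℝ} :
    ∀ k t, T ≤ t + k → ∀ ω, (∀ ω', (∀ j, j < t → ω' j = ω j) → ξ ω' = ξ ω) →
      NE T R t ξ ω = ξ ω := by
  intro k
  induction k with
  | zero => intro t ht ω _; rw [NE_of_ge R ξ (by omega)]
  | succ k ih =>
    intro t ht ω hconst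
    by_cases h : T ≤ t
    · rw [NE_of_ge R ξ h]
    · push_neg at h
      rw [NE_of_lt R ξ h ω]
      obtain ⟨hne, hprob, -⟩ := hR t h ω
      have hupd : ∀ x j, j < t → Function.update ω t x j = ω j := fun x j hj =>
        Function.update_of_ne (by omega) _ _
      have hx : ∀ x : Ω₁, NE T R (t+1) ξ (Function.update ω t x) = ξ ω := by
        intro x
        rw [ih (t+1) (by omega) (Function.update ω t x) ?_, hconst _ (hupd x)]
        intro ω' hag'
        rw [hconst ω' fun j hj => (hag' j (by omega)).trans (hupd x j hj),
          hconst _ (hupd x)]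
      have himg : ∀ y ∈ (fun P : Ω₁ → ℝ =>
          ∑ x : Ω₁, P x * NE T R (t+1) ξ (Function.update ω t x)) '' R t ω, y = ξ ω := by
        rintro y ⟨P, hP, rfl⟩
        calc ∑ x : Ω₁, P x * NE T R (t+1) ξ (Function.update ω t x)
            = ∑ x : Ω₁, P x * ξ ω := Finset.sum_congr rfl fun x _ => by rw [hx x]
          _ = ξ ω := prob_sum_const' (hprob P hP).2 _
      obtain ⟨P₀, hP₀⟩ := hne
      refine le_antisymm (csSup_le ⟨_, Set.mem_image_of_mem _ hP₀⟩
        fun y hy => (himg y hy).le) (le_csSup ⟨ξ ω, fun y hy => (himg y hy).le⟩ ?_)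
      exact ⟨P₀, hP₀, himg _ (Set.mem_image_of_mem _ hP₀)⟩

end GameProof
section GameProof2
open Function

variable {Ω₁ : Type*} [Fintype Ω₁] [Nonempty Ω₁]

lemma PE_abs {T : ℕ} {R : ℕ → (ℕ → Ω₁) → Set (Ω₁ → ℝ)} (hR : GoodKernels T R)
    {σ : ℕ → (ℕ → Ω₁) → (Ω₁ → ℝ)} (hσ : ∀ t, t < T → ∀ ω', σ t ω' ∈ R t ω')
    {ξ : (ℕ → Ω₁) → ℝ} {B : ℝ} (hξ : ∀ ω, |ξ ω| ≤ B) :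
    ∀ k t, T ≤ t + k → ∀ ω, |PE T σ t ξ ω| ≤ B := by
  intro k
  induction k with
  | zero => intro t ht ω; rw [PE_of_ge σ ξ (by omega)]; exact hξ ω
  | succ k ih =>
    intro t ht ω
    by_cases h : T ≤ t
    · rw [PE_of_ge σ ξ h]; exact hξ ω
    · push_neg at h
      rw [PE_of_lt σ ξ h ω]
      obtain ⟨-, hprob, -⟩ := hR t h ω
      exact prob_sum_abs' (hprob _ (hσ t h ω)).1 (hprob _ (hσ t h ω)).2
        fun x => ih (t+1) (by omega) _

lemma PE_local {T : ℕ} {σ : ℕ → (ℕ → Ω₁) → (Ω₁ → ℝ)} {ξ ξ' : (ℕ → Ω₁) → ℝ} :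
    ∀ k t, T ≤ t + k → ∀ ω, (∀ ω', (∀ j, j < t → ω' j = ω j) → ξ ω' = ξ' ω') →
      PE T σ t ξ ω = PE T σ t ξ' ω := by
  intro k
  induction k with
  | zero => intro t ht ω hag; rw [PE_of_ge σ ξ (by omega), PE_of_ge σ ξ' (by omega)]
            exact hag ω fun j _ => rfl
  | succ k ih =>
    intro t ht ω hag
    by_cases h : T ≤ t
    · rw [PE_of_ge σ ξ h, PE_of_ge σ ξ' h]; exact hag ω fun j _ => rfl
    · push_neg at h
      rw [PE_of_lt σ ξ h ω, PE_of_lt σ ξ' h ω]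
      refine Finset.sum_congr rfl fun x _ => ?_
      rw [ih (t+1) (by omega) (Function.update ω t x) ?_]
      intro ω' hag'
      refine hag ω' fun j hj => ?_
      rw [hag' j (by omega), Function.update_of_ne (by omega)]

lemma PE_meas {T : ℕ} {R : ℕ → (ℕ → Ω₁) → Set (Ω₁ → ℝ)} (hR : GoodKernels T R)
    {σ : ℕ → (ℕ → Ω₁) → (Ω₁ → ℝ)} (hσ : ∀ t, t < T → ∀ ω', σ t ω' ∈ R t ω')
    {ξ : (ℕ → Ω₁) → ℝ} :
    ∀ k t, T ≤ t + k → ∀ ω, (∀ ω', (∀ j, j < t → ω' j = ω j) → ξ ω' = ξ ω) →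
      PE T σ t ξ ω = ξ ω := by
  intro k
  induction k with
  | zero => intro t ht ω _; rw [PE_of_ge σ ξ (by omega)]
  | succ k ih =>
    intro t ht ω hconst
    by_cases h : T ≤ t
    · rw [PE_of_ge σ ξ h]
    · push_neg at h
      rw [PE_of_lt σ ξ h ω]
      obtain ⟨-, hprob, -⟩ := hR t h ω
      have hupd : ∀ x : Ω₁, ∀ j, j < t → Function.update ω t x j = ω j := fun x j hj =>
        Function.update_of_ne (by omega) _ _
      have hx : ∀ x : Ω₁, PE T σ (t+1) ξ (Function.update ω t x) = ξ ω := by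
        intro x
        rw [ih (t+1) (by omega) (Function.update ω t x) ?_, hconst _ (hupd x)]
        intro ω' hag'
        rw [hconst ω' fun j hj => (hag' j (by omega)).trans (hupd x j hj),
          hconst _ (hupd x)]
      calc ∑ x : Ω₁, σ t ω x * PE T σ (t+1) ξ (Function.update ω t x)
          = ∑ x : Ω₁, σ t ω x * ξ ω := Finset.sum_congr rfl fun x _ => by rw [hx x]
        _ = ξ ω := prob_sum_const' (hprob _ (hσ t h ω)).2 _

lemma PE_le_NE {T : ℕ} {R : ℕ → (ℕ → Ω₁) → Set (Ω₁ → ℝ)} (hR : GoodKernels T R)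
    {σ : ℕ → (ℕ → Ω₁) → (Ω₁ → ℝ)} (hσ : ∀ t, t < T → ∀ ω', σ t ω' ∈ R t ω')
    {ξ : (ℕ → Ω₁) → ℝ} {B : ℝ} (hξ : ∀ ω, |ξ ω| ≤ B) :
    ∀ k t, T ≤ t + k → ∀ ω, PE T σ t ξ ω ≤ NE T R t ξ ω := by
  intro k
  induction k with
  | zero => intro t ht ω; rw [PE_of_ge σ ξ (by omega), NE_of_ge R ξ (by omega)]
  | succ k ih =>
    intro t ht ω
    by_cases h : T ≤ t
    · rw [PE_of_ge σ ξ h, NE_of_ge R ξ h]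
    · push_neg at h
      rw [PE_of_lt σ ξ h ω, NE_of_lt R ξ h ω]
      obtain ⟨-, hprob, -⟩ := hR t h ω
      refine le_trans (prob_sum_le' (hprob _ (hσ t h ω)).1 fun x => ih (t+1) (by omega) _) ?_
      exact le_csSup (bddAbove_img' (fun ω' => NE_abs hR hξ T (t+1) (by omega) ω') ω hprob)
        ⟨σ t ω, hσ t h ω, rfl⟩

end GameProof2

/-- The Snell-type value process for the game. -/
noncomputable def VP {Ω₁ : Type*} [Fintype Ω₁] (T : ℕ)
    (R : ℕ → (ℕ → Ω₁) → Set (Ω₁ → ℝ)) (f : ℕ → (ℕ → Ω₁) → ℝ) (t : ℕ) : (ℕ → Ω₁) → ℝ :=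
  if h : T ≤ t then f T
  else fun ω => min (f t ω)
    (sSup ((fun P : Ω₁ → ℝ =>
      ∑ x : Ω₁, P x * VP T R f (t + 1) (Function.update ω t x)) '' R t ω))
termination_by T - t
decreasing_by omega

lemma VP_of_ge {Ω₁ : Type*} [Fintype Ω₁] {T t : ℕ} (R : ℕ → (ℕ → Ω₁) → Set (Ω₁ → ℝ))
    (f : ℕ → (ℕ → Ω₁) → ℝ) (h : T ≤ t) : VP T R f t = f T := by
  rw [VP, dif_pos h]

lemma VP_of_lt {Ω₁ : Type*} [Fintype Ω₁] {T t : ℕ} (R : ℕ → (ℕ → Ω₁) → Set (Ω₁ → ℝ))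
    (f : ℕ → (ℕ → Ω₁) → ℝ) (h : t < T) (ω : ℕ → Ω₁) : VP T R f t ω =
      min (f t ω) (sSup ((fun P : Ω₁ → ℝ =>
        ∑ x : Ω₁, P x * VP T R f (t + 1) (Function.update ω t x)) '' R t ω)) := by
  conv_lhs => rw [VP, dif_neg (not_le.2 h)]

section GameProof3
open Function
variable {Ω₁ : Type*} [Fintype Ω₁] [Nonempty Ω₁]

lemma VP_abs {T : ℕ} {R : ℕ → (ℕ → Ω₁) → Set (Ω₁ → ℝ)} (hR : GoodKernels T R)
    {f : ℕ → (ℕ → Ω₁) → ℝ} {B : ℝ} (hfB : ∀ s, s ≤ T → ∀ ω, |f s ω| ≤ B) :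
    ∀ k t, T ≤ t + k → ∀ ω, |VP T R f t ω| ≤ B := by
  intro k
  induction k with
  | zero => intro t ht ω; rw [VP_of_ge R f (by omega)]; exact hfB T le_rfl ω
  | succ k ih =>
    intro t ht ω
    by_cases h : T ≤ t
    · rw [VP_of_ge R f h]; exact hfB T le_rfl ω
    · push_neg at h
      rw [VP_of_lt R f h ω]
      obtain ⟨hne, hprob, -⟩ := hR t h ω
      have h1 : |f t ω| ≤ B := hfB t h.le ω
      have h2 : |sSup ((fun P : Ω₁ → ℝ =>
          ∑ x : Ω₁, P x * VP T R f (t + 1) (Function.update ω t x)) '' R t ω)| ≤ B := by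
        refine abs_sSup_le' (hne.image _) ?_
        rintro y ⟨P, hP, rfl⟩
        exact prob_sum_abs' (hprob P hP).1 (hprob P hP).2 fun x => ih (t+1) (by omega) _
      rw [abs_le] at h1 h2 ⊢
      exact ⟨le_min h1.1 h2.1, le_trans (min_le_left _ _) h1.2⟩

lemma VP_adapted {T : ℕ} {R : ℕ → (ℕ → Ω₁) → Set (Ω₁ → ℝ)} (hR : GoodKernels T R)
    {f : ℕ → (ℕ → Ω₁) → ℝ} (hf : AdaptedProc T f) :
    ∀ k t, T ≤ t + k → t ≤ T → ∀ ω ω', (∀ j, j < t → ω j = ω' j) →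
      VP T R f t ω = VP T R f t ω' := by
  intro k
  induction k with
  | zero =>
    intro t ht ht' ω ω' hag
    rw [VP_of_ge R f (by omega : T ≤ t)]
    exact hf T le_rfl ω ω' fun j hj => hag j (by omega)
  | succ k ih =>
    intro t ht ht' ω ω' hag
    by_cases h : T ≤ t
    · rw [VP_of_ge R f h]
      exact hf T le_rfl ω ω' fun j hj => hag j (by omega)
    · push_neg at h
      rw [VP_of_lt R f h ω, VP_of_lt R f h ω']
      have hRe : R t ω = R t ω' := (hR t h ω).2.2 ω' hag
      have hfe : f t ω = f t ω' := hf t h.le ω ω' hag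
      have hfun : (fun P : Ω₁ → ℝ =>
          ∑ x : Ω₁, P x * VP T R f (t + 1) (Function.update ω t x)) =
          (fun P : Ω₁ → ℝ =>
          ∑ x : Ω₁, P x * VP T R f (t + 1) (Function.update ω' t x)) := by
        funext P
        refine Finset.sum_congr rfl fun x _ => ?_
        rw [ih (t+1) (by omega) (by omega) (update ω t x) (update ω' t x) ?_]
        intro j hj
        rcases eq_or_ne j t with rfl | hne
        · rw [update_self, update_self]
        · rw [update_of_ne hne, update_of_ne hne]; exact hag j (by omega)
      rw [hRe, hfe, hfun]

end GameProof3
section GameProof4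
open Function
variable {Ω₁ : Type*} [Fintype Ω₁] [Nonempty Ω₁]

lemma stop_succ_le {T t : ℕ} {τ : (ℕ → Ω₁) → ℕ} (hτ : IsStopAt T t τ) {ω : ℕ → Ω₁}
    (hgt : t < τ ω) : ∀ ω', (∀ j, j < t → ω' j = ω j) → t + 1 ≤ τ ω' := by
  intro ω' hag
  rcases eq_or_lt_of_le (hτ.1 ω').1 with he | hl
  · exfalso; have := hτ.2 t ω' ω hag he.symm; omega
  · exact hl

lemma maxStop {T t : ℕ} {τ : (ℕ → Ω₁) → ℕ} (hτ : IsStopAt T t τ) (h : t < T) :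
    IsStopAt T (t+1) (fun ω' => max (τ ω') (t+1)) := by
  constructor
  · intro ω'; exact ⟨le_max_right _ _, max_le (hτ.1 ω').2 h⟩
  · intro s ω₁ ω₂ hag hs
    simp only at hs ⊢
    rcases Nat.lt_or_ge (τ ω₁) (t+1) with hlt | hge
    · have hs' : s = t + 1 := by rw [← hs, max_eq_right hlt.le]
      have hτ2 : τ ω₂ = τ ω₁ := hτ.2 (τ ω₁) ω₁ ω₂ (fun j hj => hag j (by omega)) rfl
      rw [hτ2, max_eq_right hlt.le, hs']
    · have hs' : τ ω₁ = s := by rw [← hs, max_eq_left hge]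
      have hτ2 : τ ω₂ = s := hτ.2 s ω₁ ω₂ hag hs'
      rw [hτ2]; exact max_eq_left (by omega)

lemma VP_le_NE_stopped {T : ℕ} {R : ℕ → (ℕ → Ω₁) → Set (Ω₁ → ℝ)} (hR : GoodKernels T R)
    {f : ℕ → (ℕ → Ω₁) → ℝ} (hf : AdaptedProc T f) {B : ℝ}
    (hfB : ∀ s, s ≤ T → ∀ ω, |f s ω| ≤ B) :
    ∀ k t, T ≤ t + k → t ≤ T → ∀ τ, IsStopAt T t τ → ∀ ω,
      VP T R f t ω ≤ NE T R t (fun ω' => f (τ ω') ω') ω := by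
  intro k
  induction k with
  | zero =>
    intro t ht ht' τ hτ ω
    rw [NE_of_ge R _ (by omega : T ≤ t), VP_of_ge R f (by omega)]
    have hτT : τ ω = T := le_antisymm (hτ.1 ω).2 (le_trans (by omega) (hτ.1 ω).1)
    show f T ω ≤ f (τ ω) ω
    rw [hτT]
  | succ k ih =>
    intro t ht ht' τ hτ ω
    by_cases h : T ≤ t
    · rw [NE_of_ge R _ h, VP_of_ge R f h]
      have hτT : τ ω = T := le_antisymm (hτ.1 ω).2 (le_trans h (hτ.1 ω).1)
      show f T ω ≤ f (τ ω) ω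
      rw [hτT]
    · push_neg at h
      rcases eq_or_lt_of_le (hτ.1 ω).1 with hcase | hcase
      · have h1 : NE T R t (fun ω' => f (τ ω') ω') ω = NE T R t (fun ω' => f t ω') ω :=
          NE_local T t (by omega) ω fun ω' hag => by
            rw [hτ.2 t ω ω' (fun j hj => (hag j hj).symm) hcase.symm]
        have h2 : NE T R t (fun ω' => f t ω') ω = f t ω :=
          NE_meas hR T t (by omega) ω fun ω' hag => hf t h.le ω' ω hag
        rw [h1, h2, VP_of_lt R f h ω]
        exact min_le_left _ _
      · have hτ' : IsStopAt T (t+1) (fun ω' => max (τ ω') (t+1)) := maxStop hτ h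
        have hloc : NE T R t (fun ω' => f (τ ω') ω') ω
            = NE T R t (fun ω' => f (max (τ ω') (t+1)) ω') ω := by
          refine NE_local T t (by omega) ω fun ω' hag => ?_
          rw [max_eq_left (stop_succ_le hτ hcase ω' hag)]
        rw [hloc, NE_of_lt R _ h ω, VP_of_lt R f h ω]
        obtain ⟨hne, hprob, -⟩ := hR t h ω
        refine le_trans (min_le_right _ _) (csSup_le (hne.image _) ?_)
        rintro y ⟨P, hP, rfl⟩
        have hfξ'B : ∀ ω', |f (max (τ ω') (t+1)) ω'| ≤ B := fun ω' =>
          hfB _ (hτ'.1 ω').2 ω'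
        refine le_trans (prob_sum_le' (hprob P hP).1
          fun x => ih (t+1) (by omega) (by omega) _ hτ' _) ?_
        exact le_csSup (bddAbove_img'
          (fun ω' => NE_abs hR hfξ'B T (t+1) (by omega) ω') ω hprob) ⟨P, hP, rfl⟩

end GameProof4

/-- The optimal stopping time: first time `s ≥ t` at which the payoff hits the value. -/
noncomputable def tauStar {Ω₁ : Type*} [Fintype Ω₁] (T : ℕ)
    (R : ℕ → (ℕ → Ω₁) → Set (Ω₁ → ℝ)) (f : ℕ → (ℕ → Ω₁) → ℝ) (t : ℕ) :
    (ℕ → Ω₁) → ℕ :=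
  fun ω => sInf {s | t ≤ s ∧ f s ω ≤ VP T R f s ω}

section GameProof5
open Function
variable {Ω₁ : Type*} [Fintype Ω₁] [Nonempty Ω₁]

lemma tauStar_T_mem {T t : ℕ} (R : ℕ → (ℕ → Ω₁) → Set (Ω₁ → ℝ))
    (f : ℕ → (ℕ → Ω₁) → ℝ) (ht : t ≤ T) (ω : ℕ → Ω₁) :
    T ∈ {s | t ≤ s ∧ f s ω ≤ VP T R f s ω} :=
  ⟨ht, by rw [VP_of_ge R f le_rfl]⟩

lemma tauStar_mem {T t : ℕ} (R : ℕ → (ℕ → Ω₁) → Set (Ω₁ → ℝ))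
    (f : ℕ → (ℕ → Ω₁) → ℝ) (ht : t ≤ T) (ω : ℕ → Ω₁) :
    t ≤ tauStar T R f t ω ∧ f (tauStar T R f t ω) ω ≤ VP T R f (tauStar T R f t ω) ω :=
  Nat.sInf_mem ⟨T, tauStar_T_mem R f ht ω⟩

lemma tauStar_le {T t : ℕ} (R : ℕ → (ℕ → Ω₁) → Set (Ω₁ → ℝ))
    (f : ℕ → (ℕ → Ω₁) → ℝ) (ht : t ≤ T) (ω : ℕ → Ω₁) :
    tauStar T R f t ω ≤ T :=
  Nat.sInf_le (tauStar_T_mem R f ht ω)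

lemma tauStar_stop {T t : ℕ} {R : ℕ → (ℕ → Ω₁) → Set (Ω₁ → ℝ)} (hR : GoodKernels T R)
    {f : ℕ → (ℕ → Ω₁) → ℝ} (hf : AdaptedProc T f) (ht : t ≤ T) :
    IsStopAt T t (tauStar T R f t) := by
  have key : ∀ s, s ≤ T → ∀ ω ω' : ℕ → Ω₁, (∀ j, j < s → ω j = ω' j) →
      (f s ω ≤ VP T R f s ω ↔ f s ω' ≤ VP T R f s ω') := by
    intro s hs ω ω' hag
    rw [hf s hs ω ω' hag, VP_adapted hR hf T s (by omega) hs ω ω' hag]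
  refine ⟨fun ω => ⟨(tauStar_mem R f ht ω).1, tauStar_le R f ht ω⟩, ?_⟩
  intro s ω ω' hag hs
  have hmem : s ∈ {u | t ≤ u ∧ f u ω ≤ VP T R f u ω} := hs ▸ Nat.sInf_mem
    ⟨T, tauStar_T_mem R f ht ω⟩
  have hsT : s ≤ T := hs ▸ tauStar_le R f ht ω
  have hmem' : s ∈ {u | t ≤ u ∧ f u ω' ≤ VP T R f u ω'} :=
    ⟨hmem.1, (key s hsT ω ω' hag).1 hmem.2⟩
  refine le_antisymm (Nat.sInf_le hmem') ?_
  by_contra hlt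
  push_neg at hlt
  have hd1 : tauStar T R f t ω = sInf {u | t ≤ u ∧ f u ω ≤ VP T R f u ω} := rfl
  have hd2 : tauStar T R f t ω' = sInf {u | t ≤ u ∧ f u ω' ≤ VP T R f u ω'} := rfl
  rw [hd1] at hs
  rw [hd2] at hlt
  have hm := Nat.sInf_mem (⟨s, hmem'⟩ : {u | t ≤ u ∧ f u ω' ≤ VP T R f u ω'}.Nonempty)
  set m := sInf {u | t ≤ u ∧ f u ω' ≤ VP T R f u ω'} with hmdef
  have hms : m < s := hlt
  have hmemm : m ∈ {u | t ≤ u ∧ f u ω ≤ VP T R f u ω} :=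
    ⟨hm.1, (key m (by omega) ω ω' fun j hj => hag j (by omega)).2 hm.2⟩
  have := Nat.sInf_le hmemm
  omega

lemma NE_tauStar {T : ℕ} {R : ℕ → (ℕ → Ω₁) → Set (Ω₁ → ℝ)} (hR : GoodKernels T R)
    {f : ℕ → (ℕ → Ω₁) → ℝ} (hf : AdaptedProc T f) :
    ∀ k t, T ≤ t + k → t ≤ T → ∀ ω,
      NE T R t (fun ω' => f (tauStar T R f t ω') ω') ω = VP T R f t ω := by
  intro k
  induction k with
  | zero =>
    intro t ht ht' ω
    rw [NE_of_ge R _ (by omega : T ≤ t), VP_of_ge R f (by omega)]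
    have hτT : tauStar T R f t ω = T :=
      le_antisymm (tauStar_le R f ht' ω) (le_trans (by omega) (tauStar_mem R f ht' ω).1)
    show f (tauStar T R f t ω) ω = f T ω
    rw [hτT]
  | succ k ih =>
    intro t ht ht' ω
    by_cases h : T ≤ t
    · rw [NE_of_ge R _ h, VP_of_ge R f h]
      have hτT : tauStar T R f t ω = T :=
        le_antisymm (tauStar_le R f ht' ω) (le_trans h (tauStar_mem R f ht' ω).1)
      show f (tauStar T R f t ω) ω = f T ω
      rw [hτT]
    · push_neg at h
      by_cases hst : f t ω ≤ VP T R f t ω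
      · have hτt : ∀ ω', (∀ j, j < t → ω' j = ω j) → tauStar T R f t ω' = t := by
          intro ω' hag
          refine le_antisymm (Nat.sInf_le ⟨le_rfl, ?_⟩)
            (Nat.sInf_mem ⟨T, tauStar_T_mem R f h.le ω'⟩).1
          rw [hf t h.le ω' ω hag, VP_adapted hR hf T t (by omega) h.le ω' ω hag]
          exact hst
        have h1 : NE T R t (fun ω' => f (tauStar T R f t ω') ω') ω
            = NE T R t (fun ω' => f t ω') ω :=
          NE_local T t (by omega) ω fun ω' hag => by rw [hτt ω' hag]
        have h2 : NE T R t (fun ω' => f t ω') ω = f t ω :=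
          NE_meas hR T t (by omega) ω fun ω' hag => hf t h.le ω' ω hag
        have h3 : VP T R f t ω = f t ω :=
          le_antisymm (by rw [VP_of_lt R f h ω]; exact min_le_left _ _) hst
        rw [h1, h2, h3]
      · push_neg at hst
        have hc : sSup ((fun P : Ω₁ → ℝ =>
            ∑ x : Ω₁, P x * VP T R f (t + 1) (Function.update ω t x)) '' R t ω) ≤ f t ω := by
          by_contra hcc
          push_neg at hcc
          rw [VP_of_lt R f h ω, min_eq_left hcc.le] at hst
          exact lt_irrefl _ hst
        have hVc : VP T R f t ω = sSup ((fun P : Ω₁ → ℝ =>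
            ∑ x : Ω₁, P x * VP T R f (t + 1) (Function.update ω t x)) '' R t ω) := by
          rw [VP_of_lt R f h ω]
          exact min_eq_right hc
        have hτeq : ∀ ω', (∀ j, j < t → ω' j = ω j) →
            tauStar T R f t ω' = tauStar T R f (t+1) ω' := by
          intro ω' hag
          show sInf _ = sInf _
          congr 1
          ext s
          simp only [Set.mem_setOf_eq]
          constructor
          · rintro ⟨hts, hcnd⟩
            rcases eq_or_lt_of_le hts with rfl | hlt
            · exfalso
              rw [hf t h.le ω' ω hag, VP_adapted hR hf T t (by omega) h.le ω' ω hag] at hcnd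
              exact absurd hcnd (not_le.2 hst)
            · exact ⟨hlt, hcnd⟩
          · rintro ⟨hts, hcnd⟩
            exact ⟨by omega, hcnd⟩
        have h1 : NE T R t (fun ω' => f (tauStar T R f t ω') ω') ω
            = NE T R t (fun ω' => f (tauStar T R f (t+1) ω') ω') ω :=
          NE_local T t (by omega) ω fun ω' hag => by rw [hτeq ω' hag]
        rw [h1, NE_of_lt R _ h ω, hVc]
        congr 1
        refine Set.image_congr fun P _ => ?_
        refine Finset.sum_congr rfl fun x _ => ?_
        rw [ih (t+1) (by omega) (by omega) (update ω t x)]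

end GameProof5
section GameProof6
open Function
variable {Ω₁ : Type*} [Fintype Ω₁] [Nonempty Ω₁]

lemma VP_le_PE {T : ℕ} {R : ℕ → (ℕ → Ω₁) → Set (Ω₁ → ℝ)} (hR : GoodKernels T R)
    {f : ℕ → (ℕ → Ω₁) → ℝ} (hf : AdaptedProc T f)
    {σ : ℕ → (ℕ → Ω₁) → (Ω₁ → ℝ)} (hσ : ∀ t, t < T → ∀ ω', σ t ω' ∈ R t ω')
    {ε : ℝ} (hε : 0 ≤ ε)
    (hopt : ∀ t, t < T → ∀ ω, sSup ((fun P : Ω₁ → ℝ =>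
        ∑ x : Ω₁, P x * VP T R f (t + 1) (Function.update ω t x)) '' R t ω) - ε ≤
        ∑ x : Ω₁, σ t ω x * VP T R f (t + 1) (Function.update ω t x)) :
    ∀ k t, T ≤ t + k → t ≤ T → ∀ τ, IsStopAt T t τ → ∀ ω,
      VP T R f t ω - ((T - t : ℕ) : ℝ) * ε ≤ PE T σ t (fun ω' => f (τ ω') ω') ω := by
  intro k
  induction k with
  | zero =>
    intro t ht ht' τ hτ ω
    rw [PE_of_ge σ _ (by omega : T ≤ t), VP_of_ge R f (by omega),
      Nat.sub_eq_zero_of_le (by omega : T ≤ t)]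
    have hτT : τ ω = T := le_antisymm (hτ.1 ω).2 (le_trans (by omega) (hτ.1 ω).1)
    show f T ω - ((0 : ℕ) : ℝ) * ε ≤ f (τ ω) ω
    rw [hτT]
    simp
  | succ k ih =>
    intro t ht ht' τ hτ ω
    by_cases h : T ≤ t
    · rw [PE_of_ge σ _ h, VP_of_ge R f h, Nat.sub_eq_zero_of_le h]
      have hτT : τ ω = T := le_antisymm (hτ.1 ω).2 (le_trans h (hτ.1 ω).1)
      show f T ω - ((0 : ℕ) : ℝ) * ε ≤ f (τ ω) ω
      rw [hτT]
      simp
    · push_neg at h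
      have hcast : ((T - t : ℕ) : ℝ) * ε = ((T - (t+1) : ℕ) : ℝ) * ε + ε := by
        have hn : T - t = (T - (t+1)) + 1 := by omega
        rw [hn]
        push_cast
        ring
      rcases eq_or_lt_of_le (hτ.1 ω).1 with hcase | hcase
      · have h1 : PE T σ t (fun ω' => f (τ ω') ω') ω = PE T σ t (fun ω' => f t ω') ω :=
          PE_local T t (by omega) ω fun ω' hag => by
            rw [hτ.2 t ω ω' (fun j hj => (hag j hj).symm) hcase.symm]
        have h2 : PE T σ t (fun ω' => f t ω') ω = f t ω :=
          PE_meas hR hσ T t (by omega) ω fun ω' hag => hf t h.le ω' ω hag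
        have h3 : VP T R f t ω ≤ f t ω := by
          rw [VP_of_lt R f h ω]; exact min_le_left _ _
        have h4 : 0 ≤ ((T - t : ℕ) : ℝ) * ε := mul_nonneg (Nat.cast_nonneg _) hε
        rw [h1, h2]
        linarith
      · have hτ' : IsStopAt T (t+1) (fun ω' => max (τ ω') (t+1)) := maxStop hτ h
        have hloc : PE T σ t (fun ω' => f (τ ω') ω') ω
            = PE T σ t (fun ω' => f (max (τ ω') (t+1)) ω') ω := by
          refine PE_local T t (by omega) ω fun ω' hag => ?_
          rw [max_eq_left (stop_succ_le hτ hcase ω' hag)]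
        rw [hloc, PE_of_lt σ _ h ω]
        have hPprob := (hR t h ω).2.1 _ (hσ t h ω)
        have e1 : VP T R f t ω ≤ sSup ((fun P : Ω₁ → ℝ =>
            ∑ x : Ω₁, P x * VP T R f (t + 1) (Function.update ω t x)) '' R t ω) := by
          rw [VP_of_lt R f h ω]; exact min_le_right _ _
        have e2 := hopt t h ω
        have e3 : ∑ x : Ω₁, σ t ω x *
              (VP T R f (t+1) (Function.update ω t x) - ((T - (t+1) : ℕ) : ℝ) * ε)
            ≤ ∑ x : Ω₁, σ t ω x *
              PE T σ (t+1) (fun ω' => f (max (τ ω') (t+1)) ω') (Function.update ω t x) :=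
          prob_sum_le' hPprob.1 fun x =>
            ih (t+1) (by omega) (by omega) _ hτ' (Function.update ω t x)
        have e4 : ∑ x : Ω₁, σ t ω x *
              (VP T R f (t+1) (Function.update ω t x) - ((T - (t+1) : ℕ) : ℝ) * ε)
            = (∑ x : Ω₁, σ t ω x * VP T R f (t+1) (Function.update ω t x))
              - ((T - (t+1) : ℕ) : ℝ) * ε := by
          simp only [mul_sub]
          rw [Finset.sum_sub_distrib, ← Finset.sum_mul, hPprob.2, one_mul]
        linarith

end GameProof6


/-- The adverse optimal stopping game has a value:
`inf_τ sup_{P ∈ 𝓡} E_P[f_τ] = sup_{P ∈ 𝓡} inf_τ E_P[f_τ]`, where `𝓡` is the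
pasting-stable family of measures generated by the one-step kernel sets `R`
(i.e. by all selections `σ` of `R`). -/
theorem stmt11 {Ω₁ : Type*} [Fintype Ω₁] [Nonempty Ω₁] (T : ℕ)
    (R : ℕ → (ℕ → Ω₁) → Set (Ω₁ → ℝ)) (f : ℕ → (ℕ → Ω₁) → ℝ)
    (hR : GoodKernels T R) (hf : AdaptedProc T f) :
    ∀ ω : ℕ → Ω₁,
      (⨅ τ : {τ : (ℕ → Ω₁) → ℕ // IsStopAt T 0 τ},
        NE T R 0 (fun ω' => f (τ.1 ω') ω') ω) =
      (⨆ σ : {σ : ℕ → (ℕ → Ω₁) → (Ω₁ → ℝ) // ∀ t, t < T → ∀ ω', σ t ω' ∈ R t ω'},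
        ⨅ τ : {τ : (ℕ → Ω₁) → ℕ // IsStopAt T 0 τ},
          PE T σ.1 0 (fun ω' => f (τ.1 ω') ω') ω) := by
  classical
  intro ω
  -- a uniform bound on the payoff
  obtain ⟨B, hfB⟩ : ∃ B : ℝ, ∀ s, s ≤ T → ∀ ω' : ℕ → Ω₁, |f s ω'| ≤ B := by
    set e : (Fin T → Ω₁) → (ℕ → Ω₁) :=
      fun p j => if h : j < T then p ⟨j, h⟩ else Classical.arbitrary Ω₁ with he
    refine ⟨Finset.univ.sup' Finset.univ_nonempty
      (fun q : Fin (T+1) × (Fin T → Ω₁) => |f q.1 (e q.2)|), ?_⟩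
    intro s hs ω'
    have heq : f s ω' = f s (e (fun i : Fin T => ω' i.1)) := by
      refine hf s hs ω' _ fun j hj => ?_
      simp only [he]
      rw [dif_pos (by omega : j < T)]
    rw [heq]
    exact Finset.le_sup' (fun q : Fin (T+1) × (Fin T → Ω₁) => |f q.1 (e q.2)|)
      (Finset.mem_univ ((⟨s, by omega⟩ : Fin (T+1)), fun i : Fin T => ω' i.1))
  -- nonemptiness of the index types
  have hτ0 : IsStopAt T 0 (fun _ : ℕ → Ω₁ => T) :=
    ⟨fun ω' => ⟨Nat.zero_le _, le_rfl⟩, fun s ω₁ ω₂ _ h => h⟩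
  haveI hNτ : Nonempty {τ : (ℕ → Ω₁) → ℕ // IsStopAt T 0 τ} := ⟨⟨_, hτ0⟩⟩
  have hσ0 : ∃ σ : ℕ → (ℕ → Ω₁) → (Ω₁ → ℝ), ∀ t, t < T → ∀ ω', σ t ω' ∈ R t ω' := by
    refine ⟨fun t ω' => if h : t < T then (hR t h ω').1.choose else fun _ => 0, ?_⟩
    intro t ht ω'
    simp only [dif_pos ht]
    exact (hR t ht ω').1.choose_spec
  haveI hNσ : Nonempty {σ : ℕ → (ℕ → Ω₁) → (Ω₁ → ℝ) //
      ∀ t, t < T → ∀ ω', σ t ω' ∈ R t ω'} := ⟨⟨hσ0.choose, hσ0.choose_spec⟩⟩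
  -- boundedness facts
  have hbddNE : BddBelow (Set.range fun τ : {τ : (ℕ → Ω₁) → ℕ // IsStopAt T 0 τ} =>
      NE T R 0 (fun ω' => f (τ.1 ω') ω') ω) := by
    refine ⟨-B, ?_⟩
    rintro y ⟨τ, rfl⟩
    exact (abs_le.1 (NE_abs hR (fun ω' => hfB _ (τ.2.1 ω').2 ω') T 0 (by omega) ω)).1
  have hbddPE : ∀ σ : {σ : ℕ → (ℕ → Ω₁) → (Ω₁ → ℝ) //
      ∀ t, t < T → ∀ ω', σ t ω' ∈ R t ω'},
      BddBelow (Set.range fun τ : {τ : (ℕ → Ω₁) → ℕ // IsStopAt T 0 τ} =>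
        PE T σ.1 0 (fun ω' => f (τ.1 ω') ω') ω) := by
    intro σ
    refine ⟨-B, ?_⟩
    rintro y ⟨τ, rfl⟩
    exact (abs_le.1 (PE_abs hR σ.2 (fun ω' => hfB _ (τ.2.1 ω').2 ω') T 0 (by omega) ω)).1
  have hbddA : BddAbove (Set.range fun σ : {σ : ℕ → (ℕ → Ω₁) → (Ω₁ → ℝ) //
      ∀ t, t < T → ∀ ω', σ t ω' ∈ R t ω'} =>
      ⨅ τ : {τ : (ℕ → Ω₁) → ℕ // IsStopAt T 0 τ},
        PE T σ.1 0 (fun ω' => f (τ.1 ω') ω') ω) := by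
    refine ⟨B, ?_⟩
    rintro y ⟨σ', rfl⟩
    refine ciInf_le_of_le (hbddPE σ') ⟨_, hτ0⟩ ?_
    exact le_of_abs_le (PE_abs hR σ'.2 (fun ω' => hfB T le_rfl ω') T 0 (by omega) ω)
  apply le_antisymm
  · -- hard direction: inf NE ≤ sup inf PE
    have hle1 : (⨅ τ : {τ : (ℕ → Ω₁) → ℕ // IsStopAt T 0 τ},
        NE T R 0 (fun ω' => f (τ.1 ω') ω') ω) ≤ VP T R f 0 ω :=
      ciInf_le_of_le hbddNE ⟨tauStar T R f 0, tauStar_stop hR hf (Nat.zero_le T)⟩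
        (le_of_eq (NE_tauStar hR hf T 0 (by omega) (Nat.zero_le T) ω))
    refine le_trans hle1 (le_of_forall_pos_le_add fun ε hε => ?_)
    set δ : ℝ := ε / (T + 1) with hδ
    have hδpos : 0 < δ := div_pos hε (by positivity)
    have hsel : ∀ t, t < T → ∀ ω' : ℕ → Ω₁, ∃ P : Ω₁ → ℝ, P ∈ R t ω' ∧
        sSup ((fun P : Ω₁ → ℝ =>
          ∑ x : Ω₁, P x * VP T R f (t + 1) (Function.update ω' t x)) '' R t ω') - δ ≤
          ∑ x : Ω₁, P x * VP T R f (t + 1) (Function.update ω' t x) := by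
      intro t ht ω'
      obtain ⟨y, ⟨P, hP, rfl⟩, hy⟩ :=
        exists_lt_of_lt_csSup ((hR t ht ω').1.image _) (sub_lt_self _ hδpos)
      exact ⟨P, hP, hy.le⟩
    choose Psel hPmem hPval using hsel
    set σε : ℕ → (ℕ → Ω₁) → (Ω₁ → ℝ) :=
      fun t ω' => if h : t < T then Psel t h ω' else fun _ => 0 with hσεdef
    have hσεmem : ∀ t, t < T → ∀ ω', σε t ω' ∈ R t ω' := by
      intro t ht ω'
      simp only [hσεdef, dif_pos ht]
      exact hPmem t ht ω'
    have hσεval : ∀ t, t < T → ∀ ω'' : ℕ → Ω₁,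
        sSup ((fun P : Ω₁ → ℝ =>
          ∑ x : Ω₁, P x * VP T R f (t + 1) (Function.update ω'' t x)) '' R t ω'') - δ ≤
          ∑ x : Ω₁, σε t ω'' x * VP T R f (t + 1) (Function.update ω'' t x) := by
      intro t ht ω''
      simp only [hσεdef, dif_pos ht]
      exact hPval t ht ω''
    have hlow := VP_le_PE hR hf hσεmem hδpos.le hσεval T 0 (by omega) (Nat.zero_le T)
    have hstep : VP T R f 0 ω - ((T - 0 : ℕ) : ℝ) * δ ≤
        ⨅ τ : {τ : (ℕ → Ω₁) → ℕ // IsStopAt T 0 τ},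
          PE T σε 0 (fun ω' => f (τ.1 ω') ω') ω :=
      le_ciInf fun τ => hlow τ.1 τ.2 ω
    have hsup : (⨅ τ : {τ : (ℕ → Ω₁) → ℕ // IsStopAt T 0 τ},
        PE T σε 0 (fun ω' => f (τ.1 ω') ω') ω) ≤
        ⨆ σ : {σ : ℕ → (ℕ → Ω₁) → (Ω₁ → ℝ) // ∀ t, t < T → ∀ ω', σ t ω' ∈ R t ω'},
        ⨅ τ : {τ : (ℕ → Ω₁) → ℕ // IsStopAt T 0 τ},
          PE T σ.1 0 (fun ω' => f (τ.1 ω') ω') ω :=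
      le_ciSup hbddA ⟨σε, hσεmem⟩
    have hTδ : ((T - 0 : ℕ) : ℝ) * δ ≤ ε := by
      rw [Nat.sub_zero, hδ]
      have h1 : (T : ℝ) ≤ (T : ℝ) + 1 := by linarith
      have h2 : (0 : ℝ) ≤ ε / ((T : ℝ) + 1) := le_of_lt hδpos
      calc (T : ℝ) * (ε / ((T : ℝ) + 1)) ≤ ((T : ℝ) + 1) * (ε / ((T : ℝ) + 1)) :=
            mul_le_mul_of_nonneg_right h1 h2
        _ = ε := by field_simp
    linarith
  · -- easy direction: sup inf PE ≤ inf NE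
    refine ciSup_le fun σ => le_ciInf fun τ => ?_
    exact ciInf_le_of_le (hbddPE σ) τ
      (PE_le_NE hR σ.2 (fun ω' => hfB _ (τ.2.1 ω').2 ω') T 0 (by omega) ω)
end
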